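/- arXiv:0802.1279 — 5 statements merged into one kernel-verified Lean document; each statement's English description precedes it below -/
import Mathlib

section
/- Let u = x_1^{a_1}···x_n^{a_n} with a_1 > 0 and v = x_1^{b_1}···x_n^{b_n} be monomials of degree d with u ≥_lex v, and suppose I = (L(u,v)) is a completely lexsegment ideal satisfying one of the following conditions (which characterize having a linear resolution): (a) u = x_1^a x_2^{d-a} and v = x_1^a x_n^{d-a} for some 0 < a ≤ d; (b) b_1 < a_1 − 1; (c) b_1 = a_1 − 1 and, for the lex-largest monomial w of degree d with w <_lex v, one has x_1·w/x_{max(w)} ≤_lex u. Then I has linear quotients with respect to the ordering of its minimal generators L(u,v) = {w_1, …, w_r} where w_1 ≺ w_2 ≺ … ≺ w_r. -/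
open MvPolynomial

/-- Exponent vectors of monomials in `n` variables; index `i` corresponds to the variable
`x_{i+1}`, so that the `toLex` order on exponent vectors is the lexicographic order on
monomials with `x_1 > x_2 > ⋯ > x_n`. -/
abbrev Mon (n : ℕ) := Fin n →₀ ℕ

/-- The degree of a monomial. -/
def monDeg {n : ℕ} (m : Mon n) : ℕ := ∑ i, m i

/-- The lexsegment `L(u,v)`: monomials of degree `d` with `u ≥_lex w ≥_lex v`. -/
def lexSeg {n : ℕ} (d : ℕ) (u v : Mon n) : Set (Mon n) :=
  {w | monDeg w = d ∧ toLex v ≤ toLex w ∧ toLex w ≤ toLex u}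

/-- The monomial ideal generated by a set of monomials. -/
noncomputable def monomialIdeal {n : ℕ} (k : Type*) [Field k] (T : Set (Mon n)) :
    Ideal (MvPolynomial (Fin n) k) :=
  Ideal.span ((fun m => (monomial m (1 : k) : MvPolynomial (Fin n) k)) '' T)

/-- The order `≺` on monomials of a fixed degree: `w ≺ w'` iff `ν₁(w) < ν₁(w')`, or
`ν₁(w) = ν₁(w')` and `w >_lex w'`. -/
def prec {n : ℕ} [NeZero n] (z w : Mon n) : Prop :=
  z 0 < w 0 ∨ (z 0 = w 0 ∧ toLex w < toLex z)

/-- A set `T` of monomials, totally ordered by a relation `r`, generates an ideal with linear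
quotients with respect to `r` if for every `w ∈ T` the colon ideal of the ideal generated by
the earlier monomials `{z ∈ T | r z w}` by `w` is generated by a subset of the variables. -/
noncomputable def hasLinearQuotientsWrt {n : ℕ} (k : Type*) [Field k] (T : Set (Mon n))
    (r : Mon n → Mon n → Prop) : Prop :=
  ∀ w ∈ T, ∃ V : Set (Fin n),
    Submodule.colon (monomialIdeal k {z ∈ T | r z w})
        (Ideal.span {(monomial w (1 : k) : MvPolynomial (Fin n) k)}) =
      Ideal.span ((fun i => (X i : MvPolynomial (Fin n) k)) '' V)

/-- `max(m)`: the largest index of a variable dividing the monomial `m`. -/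
def maxVar {n : ℕ} [NeZero n] (m : Mon n) : Fin n := WithBot.unbotD 0 m.support.max

/-- The shadow of a set of monomials. -/
def shad {n : ℕ} (T : Set (Mon n)) : Set (Mon n) :=
  {m | ∃ t ∈ T, ∃ i : Fin n, m = t + Finsupp.single i 1}

/-- A set of monomials is a lexsegment if it is of the form `L(u,v)`. -/
def IsLexSegSet {n : ℕ} (T : Set (Mon n)) : Prop :=
  ∃ (e : ℕ) (u v : Mon n), monDeg u = e ∧ monDeg v = e ∧ toLex v ≤ toLex u ∧ T = lexSeg e u v

/-- A lexsegment is a completely lexsegment if all its iterated shadows are lexsegments. -/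
def IsCompletelyLexSeg {n : ℕ} (T : Set (Mon n)) : Prop :=
  ∀ j : ℕ, IsLexSegSet (shad^[j] T)

/-- `set(w)` for `w ∈ L(u,v)`: the set of `s` with `x_s · w ∈ I_{≺ w}`, where `I_{≺ w}` is the
ideal generated by `{z ∈ L(u,v) | z ≺ w}`. -/
noncomputable def setW {n : ℕ} [NeZero n] (k : Type*) [Field k] (d : ℕ) (u v : Mon n)
    (w : Mon n) : Set (Fin n) :=
  {s | (monomial (w + Finsupp.single s 1) (1 : k) : MvPolynomial (Fin n) k) ∈
    monomialIdeal k {z ∈ lexSeg d u v | prec z w}}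

/-- `g` is the value of the decomposition function of `I = (L(u,v))` at the monomial `m`:
`g` is the `≺`-smallest `w' ∈ L(u,v)` such that `m ∈ I_{⪯ w'}`. -/
noncomputable def isDecompOf {n : ℕ} [NeZero n] (k : Type*) [Field k] (d : ℕ) (u v : Mon n)
    (m : Mon n) (g : Mon n) : Prop :=
  g ∈ lexSeg d u v ∧
  (monomial m (1 : k) : MvPolynomial (Fin n) k) ∈
      monomialIdeal k {z ∈ lexSeg d u v | prec z g ∨ z = g} ∧
  ∀ w' ∈ lexSeg d u v,
    (monomial m (1 : k) : MvPolynomial (Fin n) k) ∈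
        monomialIdeal k {z ∈ lexSeg d u v | prec z w' ∨ z = w'} →
      g = w' ∨ prec g w'

/-- Reversing the variables: the `toLex` order on `revMon` exponent vectors is the
lexicographic order induced by `x_n > x_{n-1} > ⋯ > x_1`. -/
def revMon {n : ℕ} (m : Mon n) : Mon n := Finsupp.equivMapDomain Fin.revPerm m

/-- The depth of `S/I` with respect to the graded maximal ideal `(x_1, …, x_n)`:
the maximal length of an `S/I`-regular sequence of elements of `(x_1, …, x_n)`. -/
noncomputable def ringDepth {n : ℕ} {k : Type*} [Field k]
    (I : Ideal (MvPolynomial (Fin n) k)) : ℕ :=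
  sSup {r : ℕ | ∃ rs : List (MvPolynomial (Fin n) k), rs.length = r ∧
    (∀ x ∈ rs, x ∈ Ideal.span (Set.range (X : Fin n → MvPolynomial (Fin n) k))) ∧
    RingTheory.Sequence.IsRegular (MvPolynomial (Fin n) k ⧸ I) rs}
namespace LQAux
variable {n : ℕ} [NeZero n]
set_option linter.unusedSectionVars false

lemma lexlt_def {a b : Mon n} :
    toLex a < toLex b ↔ ∃ i, (∀ j, j < i → a j = b j) ∧ a i < b i :=
  Finsupp.lex_def

lemma lexle_iff {a b : Mon n} : toLex a ≤ toLex b ↔ a = b ∨ toLex a < toLex b := by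
  rw [le_iff_lt_or_eq]; constructor
  · rintro (h | h); · exact Or.inr h
    · exact Or.inl (toLex.injective h ▸ rfl)
  · rintro (h | h); · exact Or.inr (by rw [h])
    · exact Or.inl h

lemma not_lt_zero_fin (j : Fin n) : ¬ j < (0 : Fin n) := not_lt.2 (Fin.zero_le j)

lemma head_lt {a b : Mon n} (h : a 0 < b 0) : toLex a < toLex b :=
  lexlt_def.2 ⟨0, fun j hj => absurd hj (not_lt_zero_fin j), h⟩

lemma head_le {a b : Mon n} (h : toLex a ≤ toLex b) : a 0 ≤ b 0 := by
  by_contra hc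
  exact absurd (head_lt (by omega : b 0 < a 0)) (not_lt.2 h)

lemma ptle_toLex {a b : Mon n} (h : a ≤ b) : toLex a ≤ toLex b :=
  Finsupp.toLex_monotone h

lemma monDeg_add (a b : Mon n) : monDeg (a + b) = monDeg a + monDeg b := by
  simp [monDeg, Finsupp.add_apply, Finset.sum_add_distrib]

lemma monDeg_single (i : Fin n) (c : ℕ) : monDeg (Finsupp.single i c) = c := by
  simp [monDeg, Finsupp.single_apply]

lemma sum_lt_of_agree {a b : Mon n} {q : Fin n} (hag : ∀ j, j < q → a j = b j)
    (hq : a q < b q) (hbey : ∀ j, q < j → a j = 0) : monDeg a < monDeg b := by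
  have h1 : monDeg a = ∑ j ∈ Finset.Iic q, a j := by
    refine (Finset.sum_subset (Finset.subset_univ _) ?_).symm
    intro x _ hx
    exact hbey x (by simpa using hx)
  have h2 : ∑ j ∈ Finset.Iic q, a j = (∑ j ∈ Finset.Iio q, a j) + a q := by
    rw [← Finset.Iio_insert, Finset.sum_insert (by simp)]; ring
  have h3 : ∑ j ∈ Finset.Iio q, a j = ∑ j ∈ Finset.Iio q, b j :=
    Finset.sum_congr rfl fun j hj => hag j (by simpa using hj)
  have h4 : (∑ j ∈ Finset.Iio q, b j) + b q = ∑ j ∈ Finset.Iic q, b j := by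
    rw [← Finset.Iio_insert, Finset.sum_insert (by simp)]; ring
  have h5 : ∑ j ∈ Finset.Iic q, b j ≤ monDeg b :=
    Finset.sum_le_sum_of_subset (Finset.subset_univ _)
  omega

lemma sum2 {m : Mon n} {i j : Fin n} (h : i ≠ j) : m i + m j ≤ monDeg m := by
  have : ∑ x ∈ ({i, j} : Finset (Fin n)), m x ≤ monDeg m :=
    Finset.sum_le_sum_of_subset (Finset.subset_univ _)
  rwa [Finset.sum_pair h] at this

lemma sum3 {m : Mon n} {i j p : Fin n} (hij : i ≠ j) (hip : i ≠ p) (hjp : j ≠ p) :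
    m i + m j + m p ≤ monDeg m := by
  have : ∑ x ∈ ({i, j, p} : Finset (Fin n)), m x ≤ monDeg m :=
    Finset.sum_le_sum_of_subset (Finset.subset_univ _)
  rwa [Finset.sum_insert (by simp [hij, hip]), Finset.sum_pair hjp, ← add_assoc] at this

lemma exists_exceed {a b : Mon n} (hne : a ≠ b) (hdeg : monDeg a = monDeg b) :
    ∃ j, b j < a j := by
  by_contra hc
  push_neg at hc
  have hne' : ∃ j, a j < b j := by
    by_contra hc2
    push_neg at hc2
    exact hne (Finsupp.ext fun j => le_antisymm (hc j) (hc2 j))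
  obtain ⟨j0, hj0⟩ := hne'
  have : monDeg a < monDeg b :=
    Finset.sum_lt_sum (fun j _ => hc j) ⟨j0, Finset.mem_univ j0, hj0⟩
  omega

/-- `M'` lemma: if `α` agrees with `β` below `P` and `β` vanishes beyond `P`,
and degrees agree, then `α ≤ β` in lex. -/
lemma lexM {a b : Mon n} (P : Fin n) (hag : ∀ j, j < P → a j = b j)
    (hz : ∀ j, P < j → b j = 0) (hdeg : monDeg a = monDeg b) : toLex a ≤ toLex b := by
  by_contra hc
  rw [not_le] at hc
  obtain ⟨q, hq1, hq2⟩ := lexlt_def.1 hc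
  have hqP : ¬ q < P := fun h => by have := hag q h; omega
  have : monDeg b < monDeg a := by
    refine sum_lt_of_agree hq1 hq2 (fun j hj => ?_)
    exact hz j (lt_of_le_of_lt (not_lt.1 hqP) hj)
  omega

lemma maxVar_ge {m : Mon n} {j : Fin n} (h : 0 < m j) : j ≤ maxVar m := by
  have hj : j ∈ m.support := Finsupp.mem_support_iff.2 (by omega)
  obtain ⟨b, hb⟩ := Finset.max_of_mem hj
  have : maxVar m = b := by rw [maxVar, hb]; rfl
  rw [this]
  exact Finset.le_max_of_eq hj hb

lemma maxVar_pos {m : Mon n} {j : Fin n} (h : 0 < m j) : 0 < m (maxVar m) := by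
  have hj : j ∈ m.support := Finsupp.mem_support_iff.2 (by omega)
  obtain ⟨b, hb⟩ := Finset.max_of_mem hj
  have hbm : b ∈ m.support := Finset.mem_of_max hb
  have : maxVar m = b := by rw [maxVar, hb]; rfl
  rw [this]
  have := Finsupp.mem_support_iff.1 hbm
  omega

lemma maxVar_le {m : Mon n} {P : Fin n} (hm : 0 < m P) (h : ∀ j, P < j → m j = 0) :
    maxVar m = P := by
  refine le_antisymm ?_ (maxVar_ge hm)
  by_contra hc
  rw [not_le] at hc
  have := maxVar_pos hm
  have := h _ hc
  omega

/-- the swap construction: add 1 at `t`, remove 1 at `i`. -/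
noncomputable def swap (w : Mon n) (t i : Fin n) : Mon n :=
  Finsupp.onFinset Finset.univ
    (fun j => if j = t then w j + 1 else if j = i then w j - 1 else w j)
    (fun _ _ => Finset.mem_univ _)

lemma swap_apply (w : Mon n) (t i j : Fin n) :
    swap w t i j = if j = t then w j + 1 else if j = i then w j - 1 else w j := rfl

lemma swap_add (w : Mon n) {t i : Fin n} (hti : t ≠ i) (hi : 0 < w i) :
    swap w t i + Finsupp.single i 1 = w + Finsupp.single t 1 := by
  ext j
  simp only [Finsupp.add_apply, swap_apply, Finsupp.single_apply]
  by_cases h1 : j = t <;> by_cases h2 : j = i <;>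
    simp_all [eq_comm] <;> omega

lemma monDeg_swap (w : Mon n) {t i : Fin n} (hti : t ≠ i) (hi : 0 < w i) :
    monDeg (swap w t i) = monDeg w := by
  have := congrArg monDeg (swap_add w hti hi)
  rw [monDeg_add, monDeg_add, monDeg_single, monDeg_single] at this
  omega

lemma swap_le (w : Mon n) (t i : Fin n) : swap w t i ≤ w + Finsupp.single t 1 := by
  rw [Finsupp.le_def]
  intro j
  simp only [Finsupp.add_apply, swap_apply, Finsupp.single_apply]
  by_cases h1 : j = t <;> by_cases h2 : j = i <;> simp_all [eq_comm] <;> omega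

lemma lt_swap_up (w : Mon n) {t i : Fin n} (hti : t < i) : toLex w < toLex (swap w t i) := by
  refine lexlt_def.2 ⟨t, fun j hj => ?_, ?_⟩
  · rw [swap_apply]
    have h1 : j ≠ t := ne_of_lt hj
    have h2 : j ≠ i := ne_of_lt (lt_trans hj hti)
    simp [h1, h2]
  · rw [swap_apply]; simp

lemma swap_down_lt (w : Mon n) {t : Fin n} (ht : t ≠ 0) (h0 : 0 < w 0) :
    toLex (swap w t 0) < toLex w := by
  refine lexlt_def.2 ⟨0, fun j hj => absurd hj (not_lt_zero_fin j), ?_⟩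
  rw [swap_apply, if_neg (show (0 : Fin n) ≠ t from fun h => ht h.symm), if_pos rfl]
  omega

lemma swap_apply_ne (w : Mon n) {t i j : Fin n} (h1 : j ≠ t) (h2 : j ≠ i) :
    swap w t i j = w j := by rw [swap_apply, if_neg h1, if_neg h2]

lemma swap_apply_t (w : Mon n) (t i : Fin n) : swap w t i t = w t + 1 := by
  rw [swap_apply, if_pos rfl]

lemma swap_apply_i (w : Mon n) {t i : Fin n} (h : t ≠ i) : swap w t i i = w i - 1 := by
  rw [swap_apply, if_neg (show i ≠ t from Ne.symm h), if_pos rfl]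

end LQAux
namespace LQAux
variable {n : ℕ} [NeZero n]
set_option linter.unusedSectionVars false

lemma maxVar_beyond {m : Mon n} {j : Fin n} (h : maxVar m < j) : m j = 0 := by
  by_contra hc
  exact absurd (maxVar_ge (by omega : 0 < m j)) (not_le.2 h)

lemma sub_single_eq_swap (m : Mon n) {t i : Fin n} (hti : t ≠ i) :
    m + Finsupp.single t 1 - Finsupp.single i 1 = swap m t i := by
  ext j
  rw [Finsupp.tsub_apply]
  simp only [Finsupp.add_apply, Finsupp.single_apply, swap_apply]
  rcases eq_or_ne j t with h1 | h1
  · subst h1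
    simp [Ne.symm hti]
  · rcases eq_or_ne j i with h2 | h2
    · subst h2
      simp [hti, Ne.symm hti]
    · simp [h1, h2, Ne.symm h1, Ne.symm h2]

/-- find the minimal index where `z` exceeds `w`. -/
lemma min_exceed {z w : Mon n} (h : ∃ j, w j < z j) :
    ∃ t, w t < z t ∧ ∀ j, j < t → z j ≤ w j := by
  classical
  set S : Finset (Fin n) := Finset.univ.filter (fun j => w j < z j) with hS
  have hSne : S.Nonempty := by
    obtain ⟨j, hj⟩ := h
    exact ⟨j, by simp [hS, hj]⟩
  refine ⟨S.min' hSne, ?_, ?_⟩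
  · have := S.min'_mem hSne
    simp only [hS, Finset.mem_filter] at this
    exact this.2
  · intro j hj
    by_contra hc
    have hjS : j ∈ S := by simp [hS]; omega
    exact absurd (S.min'_le j hjS) (not_le.2 hj)

/-- same-head situation: first difference data. -/
lemma same_head {z w : Mon n} (hzd : monDeg z = monDeg w) (hz0 : z 0 = w 0)
    (hlt : toLex w < toLex z) :
    ∃ t, w t < z t ∧ t ≠ 0 ∧ (∀ j, j < t → w j = z j) ∧
      t < maxVar w ∧ 0 < w (maxVar w) := by
  obtain ⟨t, hag, hlt'⟩ := lexlt_def.1 hlt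
  have ht0 : t ≠ 0 := fun he => by rw [he] at hlt'; omega
  have hex : ∃ j, t < j ∧ 0 < w j := by
    by_contra hc
    push_neg at hc
    have : monDeg w < monDeg z :=
      sum_lt_of_agree hag hlt' (fun j hj => by have := hc j hj; omega)
    omega
  obtain ⟨j, hj1, hj2⟩ := hex
  exact ⟨t, hlt', ht0, hag, lt_of_lt_of_le hj1 (maxVar_ge hj2), maxVar_pos hj2⟩

/-- Core lemma, case (b). -/
lemma coreB {d : ℕ} {u v : Mon n} (ha1 : 0 < u 0) (hb : v 0 + 1 < u 0)
    {z w : Mon n} (hz : z ∈ lexSeg d u v) (hw : w ∈ lexSeg d u v) (hzw : prec z w) :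
    ∃ t, w t < z t ∧ ∃ z', z' ∈ lexSeg d u v ∧ prec z' w ∧
      z' ≤ w + Finsupp.single t 1 := by
  obtain ⟨hzd, hvz, hzu⟩ := hz
  obtain ⟨hwd, hvw, hwu⟩ := hw
  rcases hzw with h0 | ⟨hz0, hlt⟩
  · -- z 0 < w 0
    have hvz0 : v 0 ≤ z 0 := head_le hvz
    have hex : ∃ j, w j < z j :=
      exists_exceed (fun he => by rw [he] at h0; omega) (hzd.trans hwd.symm)
    obtain ⟨t, ht, htmin⟩ := min_exceed hex
    have ht0 : t ≠ 0 := fun he => by rw [he] at ht; omega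
    have h0w : 0 < w 0 := by omega
    by_cases hcase : v 0 + 1 < w 0
    · refine ⟨t, ht, swap w t 0,
        ⟨(monDeg_swap w ht0 h0w).trans hwd,
         le_of_lt (head_lt (by rw [swap_apply_i w ht0]; omega)),
         le_trans (le_of_lt (swap_down_lt w ht0 h0w)) hwu⟩,
        Or.inl (by rw [swap_apply_i w ht0]; omega), swap_le w t 0⟩
    · have hw0 : w 0 = v 0 + 1 := by omega
      by_cases hexj : ∃ j, t < j ∧ 0 < w j
      · obtain ⟨j, hj1, hj2⟩ := hexj
        have htM : t < maxVar w := lt_of_lt_of_le hj1 (maxVar_ge hj2)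
        have hM : 0 < w (maxVar w) := maxVar_pos hj2
        have hM0 : (0 : Fin n) ≠ maxVar w :=
          fun he => absurd (he ▸ htM) (not_lt_zero_fin t)
        refine ⟨t, ht, swap w t (maxVar w),
          ⟨(monDeg_swap w (ne_of_lt htM) hM).trans hwd,
           le_trans hvw (le_of_lt (lt_swap_up w htM)), ?_⟩,
          Or.inr ⟨swap_apply_ne w (fun he => ht0 he.symm) hM0, lt_swap_up w htM⟩,
          swap_le w t (maxVar w)⟩
        · refine le_of_lt (head_lt ?_)
          rw [swap_apply_ne w (fun he => ht0 he.symm) hM0]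
          omega
      · push_neg at hexj
        by_cases hvy : toLex v ≤ toLex (swap w t 0)
        · refine ⟨t, ht, swap w t 0,
            ⟨(monDeg_swap w ht0 h0w).trans hwd, hvy,
             le_trans (le_of_lt (swap_down_lt w ht0 h0w)) hwu⟩,
            Or.inl (by rw [swap_apply_i w ht0]; omega), swap_le w t 0⟩
        · exfalso
          rw [not_le] at hvy
          have hz0 : z 0 = v 0 := by omega
          have hyz : toLex (swap w t 0) < toLex z := lt_of_lt_of_le hvy hvz
          obtain ⟨p, hp1, hp2⟩ := lexlt_def.1 hyz
          have hp0 : p ≠ 0 := by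
            intro he
            rw [he, swap_apply_i w ht0] at hp2
            omega
          have hpt : ¬ p < t := by
            intro hpt
            rw [swap_apply_ne w (ne_of_lt hpt) hp0] at hp2
            have := htmin p hpt
            omega
          have hcon : monDeg (swap w t 0) < monDeg z := by
            refine sum_lt_of_agree hp1 hp2 (fun j hj => ?_)
            have hjt : t < j := lt_of_le_of_lt (not_lt.1 hpt) hj
            rw [swap_apply_ne w (ne_of_gt hjt)
              (fun (he : j = (0 : Fin n)) => not_lt_zero_fin t (he ▸ hjt))]
            have := hexj j hjt
            omega
          rw [monDeg_swap w ht0 h0w] at hcon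
          omega
  · -- z 0 = w 0, w < z
    obtain ⟨t, ht, ht0, hag, htM, hM⟩ := same_head (hzd.trans hwd.symm) hz0 hlt
    have hM0 : (0 : Fin n) ≠ maxVar w := fun he => absurd (he ▸ htM) (not_lt_zero_fin t)
    have hprec : prec (swap w t (maxVar w)) w :=
      Or.inr ⟨swap_apply_ne w (fun he => ht0 he.symm) hM0, lt_swap_up w htM⟩
    by_cases hzu' : toLex (swap w t (maxVar w)) ≤ toLex u
    · exact ⟨t, ht, swap w t (maxVar w),
        ⟨(monDeg_swap w (ne_of_lt htM) hM).trans hwd,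
         le_trans hvw (le_of_lt (lt_swap_up w htM)), hzu'⟩,
        hprec, swap_le w t (maxVar w)⟩
    · have hu0 : u 0 = w 0 := by
        have h1 : w 0 ≤ u 0 := head_le hwu
        by_contra hne
        refine hzu' (le_of_lt (head_lt ?_))
        rw [swap_apply_ne w (fun he => ht0 he.symm) hM0]
        omega
      have h0w : 0 < w 0 := by omega
      refine ⟨t, ht, swap w t 0,
        ⟨(monDeg_swap w ht0 h0w).trans hwd,
         le_of_lt (head_lt (by rw [swap_apply_i w ht0]; omega)),
         le_trans (le_of_lt (swap_down_lt w ht0 h0w)) hwu⟩,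
        Or.inl (by rw [swap_apply_i w ht0]; omega), swap_le w t 0⟩

end LQAux
namespace LQAux
variable {n : ℕ} [NeZero n]
set_option linter.unusedSectionVars false

/-- Core lemma, case (a). -/
lemma coreA (hn : 2 ≤ n) {d a : ℕ} {u v : Mon n} (ha : 0 < a) (had : a ≤ d)
    (hu_eq : u = Finsupp.single 0 a + Finsupp.single (⟨1, by omega⟩ : Fin n) (d - a))
    (hv_eq : v = Finsupp.single 0 a + Finsupp.single (⟨n - 1, by omega⟩ : Fin n) (d - a))
    {z w : Mon n} (hz : z ∈ lexSeg d u v) (hw : w ∈ lexSeg d u v) (hzw : prec z w) :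
    ∃ t, w t < z t ∧ ∃ z', z' ∈ lexSeg d u v ∧ prec z' w ∧
      z' ≤ w + Finsupp.single t 1 := by
  obtain ⟨hzd, hvz, hzu⟩ := hz
  obtain ⟨hwd, hvw, hwu⟩ := hw
  set i1 : Fin n := ⟨1, by omega⟩ with hi1
  have hi10 : i1 ≠ 0 := by
    intro he
    have := congrArg Fin.val he
    simp [hi1] at this
  have hlst0 : (⟨n - 1, by omega⟩ : Fin n) ≠ 0 := by
    intro he
    have := congrArg Fin.val he
    simp at this
    omega
  have hu0 : u 0 = a := by
    rw [hu_eq]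
    simp [Finsupp.single_apply, hi10, Ne.symm hi10]
  have hv0 : v 0 = a := by
    rw [hv_eq]
    simp [Finsupp.single_apply, hlst0, Ne.symm hlst0]
  have hu1 : u i1 = d - a := by
    rw [hu_eq]
    simp [Finsupp.single_apply, hi10, Ne.symm hi10]
  have hz0 : z 0 = a := by
    have h1 := head_le hvz
    have h2 := head_le hzu
    omega
  have hw0 : w 0 = a := by
    have h1 := head_le hvw
    have h2 := head_le hwu
    omega
  rcases hzw with h0 | ⟨hz0', hlt⟩
  · omega
  · obtain ⟨t, ht, ht0, hag, htM, hM⟩ := same_head (hzd.trans hwd.symm) hz0' hlt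
    set M := maxVar w with hMdef
    have hM0 : (0 : Fin n) ≠ M := by
      intro he
      rw [← he] at htM
      exact not_lt_zero_fin t htM
    have hswap0 : swap w t M 0 = a := by
      rw [swap_apply_ne w (fun he => ht0 he.symm) hM0]; exact hw0
    have hdegsw : monDeg (swap w t M) = d := (monDeg_swap w (ne_of_lt htM) hM).trans hwd
    refine ⟨t, ht, swap w t M,
      ⟨hdegsw, le_trans hvw (le_of_lt (lt_swap_up w htM)), ?_⟩,
      Or.inr ⟨by rw [hswap0]; omega, lt_swap_up w htM⟩, swap_le w t M⟩
    -- swap w t M ≤ u in lex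
    by_contra hc
    rw [not_le] at hc
    obtain ⟨p, hp1, hp2⟩ := lexlt_def.1 hc
    have hp0 : p ≠ 0 := by
      intro he
      rw [he, hswap0] at hp2
      omega
    rcases eq_or_ne p i1 with hpi | hpi
    · rw [hpi, hu1] at hp2
      have hs2 := sum2 (m := swap w t M) (Ne.symm hi10)
      rw [hswap0, hdegsw] at hs2
      omega
    · have hpv0 : p.val ≠ 0 := by
        intro h
        exact hp0 (Fin.ext (by simp [h]))
      have hpv1 : p.val ≠ 1 := by
        intro h
        exact hpi (Fin.ext (by simp [hi1, h]))
      have hi1p : i1 < p := by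
        rw [Fin.lt_def]
        simp [hi1]
        omega
      have hswap1 : swap w t M i1 = d - a := by
        have := hp1 i1 hi1p
        rw [hu1] at this
        omega
      have hup : u p = 0 := by
        rw [hu_eq]
        simp [Finsupp.single_apply, Ne.symm hp0, hpi, Ne.symm hpi]
      rw [hup] at hp2
      have hs3 := sum3 (m := swap w t M) (Ne.symm hi10) (Ne.symm hp0) hi1p.ne
      rw [hswap0, hswap1, hdegsw] at hs3
      omega

end LQAux
namespace LQAux
variable {n : ℕ} [NeZero n]
set_option linter.unusedSectionVars false

lemma coreC_big (hn : 2 ≤ n) {d : ℕ} {u v : Mon n} (hu : monDeg u = d) (hv : monDeg v = d)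
    (hc2 : ∀ wt : Mon n, monDeg wt = d → toLex wt < toLex v →
      (∀ w' : Mon n, monDeg w' = d → toLex w' < toLex v → toLex w' ≤ toLex wt) →
      toLex (wt + Finsupp.single 0 1 - Finsupp.single (maxVar wt) 1) ≤ toLex u)
    {w : Mon n} (hwd : monDeg w = d) (hw0v : w 0 = v 0 + 1)
    {t : Fin n} (ht0 : t ≠ 0)
    (hvy : toLex (swap w t 0) < toLex v)
    {q : Fin n} (hq : q = maxVar (swap w t 0)) (hqt : t < q) :
    toLex (swap w t q) ≤ toLex u := by
  classical
  set y := swap w t 0 with hy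
  have h0w : 0 < w 0 := by omega
  have hy0 : y 0 = v 0 := by rw [hy, swap_apply_i w ht0]; omega
  have hydeg : monDeg y = d := (monDeg_swap w ht0 h0w).trans hwd
  have hq0 : q ≠ 0 := fun he => by rw [he] at hqt; exact not_lt_zero_fin t hqt
  have hqtne : q ≠ t := (ne_of_lt hqt).symm
  have hyt : y t = w t + 1 := by rw [hy, swap_apply_t]
  have hyq0 : 0 < y q := by
    rw [hq]
    exact maxVar_pos (show 0 < y t by omega)
  have hyeq : ∀ j, j ≠ 0 → j ≠ t → y j = w j :=
    fun j h1 h2 => by rw [hy, swap_apply_ne w h2 h1]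
  have hwq : 0 < w q := by rw [← hyeq q hq0 hqtne]; exact hyq0
  have hA0 : swap w t q 0 = w 0 :=
    swap_apply_ne w (fun he => ht0 he.symm) (fun he => hq0 he.symm)
  have hAy : ∀ j, j ≠ 0 → j ≠ q → swap w t q j = y j := by
    intro j hj0 hjq
    rcases eq_or_ne j t with rfl | hjt
    · rw [swap_apply_t, hyt]
    · rw [swap_apply_ne w hjt hjq, hyeq j hj0 hjt]
  -- last index
  have hn0 : 0 < n := Nat.pos_of_ne_zero (NeZero.ne n)
  set lst : Fin n := ⟨n - 1, by omega⟩ with hlst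
  have hle_last : ∀ j : Fin n, j ≤ lst := by
    intro j
    rw [Fin.le_def]
    have := j.isLt
    simp only [hlst]
    omega
  -- first difference of y and v
  obtain ⟨p, hpag, hplt⟩ := lexlt_def.1 hvy
  have hp0 : p ≠ 0 := fun he => by rw [he, hy0] at hplt; omega
  have hvp : 0 < v p := by omega
  have hplst : p ≠ lst := by
    intro he
    have hcon := sum_lt_of_agree hpag hplt
      (fun j hj => absurd (lt_of_le_of_lt (hle_last j) (he ▸ hj)) (lt_irrefl _))
    omega
  -- the pivot index ℓ
  obtain ⟨ℓ, ⟨hℓ0, hℓlst, hvℓ⟩, hℓmax⟩ :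
      ∃ ℓ : Fin n, (ℓ ≠ 0 ∧ ℓ < lst ∧ 0 < v ℓ) ∧
        ∀ j : Fin n, (j ≠ 0 ∧ j < lst ∧ 0 < v j) → j ≤ ℓ := by
    have hpSv : p ∈ Finset.univ.filter (fun j : Fin n => j ≠ 0 ∧ j < lst ∧ 0 < v j) := by
      simp only [Finset.mem_filter, Finset.mem_univ, true_and]
      exact ⟨hp0, lt_of_le_of_ne (hle_last p) hplst, hvp⟩
    refine ⟨(Finset.univ.filter (fun j : Fin n => j ≠ 0 ∧ j < lst ∧ 0 < v j)).max'
      ⟨p, hpSv⟩, ?_, ?_⟩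
    · have := Finset.max'_mem
        (Finset.univ.filter (fun j : Fin n => j ≠ 0 ∧ j < lst ∧ 0 < v j)) ⟨p, hpSv⟩
      simpa only [Finset.mem_filter, Finset.mem_univ, true_and] using this
    · intro j hj
      exact Finset.le_max' _ j (by
        simp only [Finset.mem_filter, Finset.mem_univ, true_and]; exact hj)
  have hpℓ : p ≤ ℓ := hℓmax p ⟨hp0, lt_of_le_of_ne (hle_last p) hplst, hvp⟩
  have hmid : ∀ j, ℓ < j → j < lst → v j = 0 := by
    intro j h1 h2
    by_contra hc
    have hj0 : j ≠ 0 := fun he => by rw [he] at h1; exact not_lt_zero_fin ℓ h1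
    exact absurd (hℓmax j ⟨hj0, h2, by omega⟩) (not_le.2 h1)
  have hℓpos : (0 : Fin n) < ℓ := lt_of_le_of_ne (Fin.zero_le ℓ) (Ne.symm hℓ0)
  -- ℓ + 1
  have hℓv : ℓ.val < n - 1 := by
    have := Fin.lt_def.1 hℓlst
    simpa [hlst] using this
  set ℓ1 : Fin n := ⟨ℓ.val + 1, by omega⟩ with hℓ1def
  have hℓℓ1 : ℓ < ℓ1 := by rw [Fin.lt_def]; simp [hℓ1def]
  have hℓ1le : ℓ1 ≤ lst := by rw [Fin.le_def]; simp [hℓ1def, hlst]; omega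
  have hℓ10 : ℓ1 ≠ 0 := by
    intro he
    rw [← he] at hℓpos
    have := Fin.lt_def.1 hℓpos
    simp [hℓ1def] at this
  have hlt_ℓ1_iff : ∀ j : Fin n, j < ℓ1 ↔ j ≤ ℓ := by
    intro j
    rw [Fin.lt_def, Fin.le_def]
    simp only [hℓ1def]
    omega
  -- the predecessor monomial wt
  set wt : Mon n := Finsupp.onFinset Finset.univ
    (fun j => if j < ℓ then v j else if j = ℓ then v ℓ - 1 else
      if j = ℓ1 then v lst + 1 else 0) (fun _ _ => Finset.mem_univ _) with hwtdef
  have hwt_apply : ∀ j, wt j = if j < ℓ then v j else if j = ℓ then v ℓ - 1 else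
      if j = ℓ1 then v lst + 1 else 0 := fun j => rfl
  have hwtlow : ∀ j, j < ℓ → wt j = v j := fun j hj => by rw [hwt_apply, if_pos hj]
  have hwtℓ : wt ℓ = v ℓ - 1 := by
    rw [hwt_apply, if_neg (lt_irrefl ℓ), if_pos rfl]
  have hwtℓ1 : wt ℓ1 = v lst + 1 := by
    rw [hwt_apply, if_neg (not_lt.2 (le_of_lt hℓℓ1)), if_neg (ne_of_gt hℓℓ1), if_pos rfl]
  have hwthigh : ∀ j, ℓ1 < j → wt j = 0 := by
    intro j hj
    have h1 : ℓ < j := lt_trans hℓℓ1 hj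
    rw [hwt_apply, if_neg (not_lt.2 (le_of_lt h1)), if_neg (ne_of_gt h1),
      if_neg (ne_of_gt hj)]
  have hwt0 : wt 0 = v 0 := hwtlow 0 hℓpos
  -- degree of wt
  have hid : wt + Finsupp.single ℓ 1 + Finsupp.single lst (v lst)
      = v + Finsupp.single ℓ1 (v lst + 1) := by
    have hne1 : ℓ1 ≠ ℓ := ne_of_gt hℓℓ1
    have hne2 : ℓ ≠ ℓ1 := ne_of_lt hℓℓ1
    have hne3 : lst ≠ ℓ := ne_of_gt (lt_of_lt_of_le hℓℓ1 hℓ1le)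
    have hnlt : ¬ ℓ1 < ℓ := not_lt.2 (le_of_lt hℓℓ1)
    ext j
    simp only [Finsupp.add_apply, Finsupp.single_apply, hwt_apply]
    by_cases h1 : j < ℓ
    · have e1 : ℓ ≠ j := ne_of_gt h1
      have e3 : ℓ1 ≠ j := ne_of_gt (lt_trans h1 hℓℓ1)
      have e2 : lst ≠ j := ne_of_gt (lt_of_lt_of_le (lt_trans h1 hℓℓ1) hℓ1le)
      simp [h1, e1, e2, e3]
    · by_cases h2 : j = ℓ
      · rw [h2]
        simp [lt_irrefl, hne1, hne3]
        omega
      · have hℓj : ℓ < j := lt_of_le_of_ne (not_lt.1 h1) (fun he => h2 he.symm)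
        have e1 : ℓ ≠ j := ne_of_lt hℓj
        by_cases h3 : j = ℓ1
        · rw [h3]
          by_cases h4 : ℓ1 = lst
          · have e5 : v ℓ1 = v lst := by rw [h4]
            simp [hnlt, hne1, hne2, h4.symm]
            omega
          · have e6 : v ℓ1 = 0 := h3 ▸ hmid j hℓj (h3 ▸ lt_of_le_of_ne (hle_last ℓ1) h4)
            simp [hnlt, hne1, hne2, e6]
            exact fun he => (congrArg v he).trans e6
        · have e8 : ℓ1 ≠ j := fun he => h3 he.symm
          by_cases h4 : j = lst
          · rw [h4] at h1 h2 h3 e1 e8 ⊢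
            simp [h1, h2, h3, e1, e8]
          · have e6 : v j = 0 := hmid j hℓj (lt_of_le_of_ne (hle_last j) h4)
            have e7 : lst ≠ j := fun he => h4 he.symm
            simp [h1, h2, h3, e1, e7, e8, e6]
  have hwtdeg : monDeg wt = d := by
    have hcon := congrArg monDeg hid
    rw [monDeg_add, monDeg_add, monDeg_add, monDeg_single, monDeg_single,
      monDeg_single, hv] at hcon
    omega
  -- wt < v
  have hwtv : toLex wt < toLex v :=
    lexlt_def.2 ⟨ℓ, fun j hj => hwtlow j hj, by rw [hwtℓ]; omega⟩
  -- maximality of wt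
  have hwtmax : ∀ w', monDeg w' = d → toLex w' < toLex v → toLex w' ≤ toLex wt := by
    intro w' hw'd hw'v
    obtain ⟨p', ag', lt'⟩ := lexlt_def.1 hw'v
    rcases lt_trichotomy p' ℓ with h | h | h
    · refine le_of_lt (lexlt_def.2 ⟨p',
        fun j hj => (ag' j hj).trans (hwtlow j (lt_trans hj h)).symm, ?_⟩)
      rw [hwtlow p' h]
      exact lt'
    · subst h
      rcases Nat.lt_or_ge (w' p') (v p' - 1) with hcase | hcase
      · refine le_of_lt (lexlt_def.2 ⟨p',
          fun j hj => (ag' j hj).trans (hwtlow j hj).symm, ?_⟩)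
        rw [hwtℓ]
        omega
      · have hw'ℓ : w' p' = v p' - 1 := by omega
        refine lexM ℓ1 (fun j hj => ?_) hwthigh (hw'd.trans hwtdeg.symm)
        rcases lt_or_eq_of_le ((hlt_ℓ1_iff j).1 hj) with hjℓ | hjℓ
        · exact (ag' j hjℓ).trans (hwtlow j hjℓ).symm
        · subst hjℓ
          rw [hw'ℓ, hwtℓ]
    · exfalso
      have hvp' : 0 < v p' := by omega
      rcases eq_or_ne p' lst with he | he
      · have hcon := sum_lt_of_agree ag' lt'
          (fun j hj => absurd (lt_of_le_of_lt (hle_last j) (he ▸ hj)) (lt_irrefl _))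
        omega
      · have := hmid p' h (lt_of_le_of_ne (hle_last p') he)
        omega
  -- apply the hypothesis (c)
  have hmaxwt : maxVar wt = ℓ1 := maxVar_le (by rw [hwtℓ1]; omega) hwthigh
  have hcond := hc2 wt hwtdeg hwtv hwtmax
  rw [hmaxwt, sub_single_eq_swap wt (Ne.symm hℓ10)] at hcond
  set B := swap wt 0 ℓ1 with hB
  have hB0 : B 0 = wt 0 + 1 := by rw [hB, swap_apply_t]
  have hBℓ1 : B ℓ1 = wt ℓ1 - 1 := by rw [hB, swap_apply_i wt (Ne.symm hℓ10)]
  have hBmid : ∀ j, j ≠ 0 → j ≠ ℓ1 → B j = wt j := by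
    intro j h1 h2
    rw [hB, swap_apply_ne wt h1 h2]
  have hBdeg : monDeg B = d := by
    rw [hB, monDeg_swap wt (Ne.symm hℓ10) (by rw [hwtℓ1]; omega)]
    exact hwtdeg
  -- final comparison
  have hptle : toLex (swap w t q) ≤ toLex (y + Finsupp.single 0 1) := by
    refine ptle_toLex (Finsupp.le_def.2 fun j => ?_)
    rw [Finsupp.add_apply, Finsupp.single_apply]
    rcases eq_or_ne j 0 with rfl | hj0
    · rw [hA0, hy0, if_pos rfl]
      omega
    · rw [if_neg (fun he => hj0 he.symm)]
      by_cases hjq : j = q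
      · rw [hjq, swap_apply_i w (ne_of_lt hqt)]
        have hh := hyeq q hq0 hqtne
        omega
      · rw [hAy j hj0 hjq]
        omega
  rcases lt_or_eq_of_le hpℓ with hpl | hpl
  · -- p < ℓ
    have h2 : toLex (y + Finsupp.single 0 1) < toLex B := by
      refine lexlt_def.2 ⟨p, fun j hj => ?_, ?_⟩
      · rw [Finsupp.add_apply, Finsupp.single_apply]
        rcases eq_or_ne j 0 with rfl | hj0
        · rw [if_pos rfl, hy0, hB0, hwt0]
        · rw [if_neg (fun he => hj0 he.symm), hpag j hj,
            hBmid j hj0 (ne_of_lt (lt_trans (lt_trans hj hpl) hℓℓ1)),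
            hwtlow j (lt_trans hj hpl)]
          omega
      · rw [Finsupp.add_apply, Finsupp.single_apply, if_neg (fun he => hp0 he.symm),
          hBmid p hp0 (ne_of_lt (lt_trans hpl hℓℓ1)), hwtlow p hpl]
        omega
    exact le_trans hptle (le_trans (le_of_lt h2) hcond)
  · -- p = ℓ
    rw [hpl] at hpag hplt
    rcases Nat.lt_or_ge (y ℓ) (v ℓ - 1) with hyℓ | hyℓ
    · have h2 : toLex (y + Finsupp.single 0 1) < toLex B := by
        refine lexlt_def.2 ⟨ℓ, fun j hj => ?_, ?_⟩
        · rw [Finsupp.add_apply, Finsupp.single_apply]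
          rcases eq_or_ne j 0 with rfl | hj0
          · rw [if_pos rfl, hy0, hB0, hwt0]
          · rw [if_neg (fun he => hj0 he.symm), hpag j hj,
              hBmid j hj0 (ne_of_lt (lt_trans hj hℓℓ1)), hwtlow j hj]
            omega
        · rw [Finsupp.add_apply, Finsupp.single_apply, if_neg (fun he => hℓ0 he.symm),
            hBmid ℓ hℓ0 (ne_of_lt hℓℓ1), hwtℓ]
          omega
      exact le_trans hptle (le_trans (le_of_lt h2) hcond)
    · have hyℓeq : y ℓ = v ℓ - 1 := by omega
      have hqℓ : ℓ < q := by
        by_contra hc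
        rw [not_lt] at hc
        have hbey : ∀ j, ℓ < j → y j = 0 := fun j hj =>
          maxVar_beyond (by rw [← hq]; exact lt_of_le_of_lt hc hj)
        have hcon := sum_lt_of_agree hpag hplt hbey
        omega
      refine le_trans (lexM ℓ1 (fun j hj => ?_) (fun j hj => ?_)
        ((monDeg_swap w (ne_of_lt hqt) hwq).trans (hwd.trans hBdeg.symm))) hcond
      · have hjℓ : j ≤ ℓ := (hlt_ℓ1_iff j).1 hj
        rcases eq_or_ne j 0 with rfl | hj0
        · rw [hA0, hB0, hwt0]
          omega
        · have hjq : j ≠ q := ne_of_lt (lt_of_le_of_lt hjℓ hqℓ)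
          rw [hAy j hj0 hjq, hBmid j hj0 (ne_of_lt (lt_of_le_of_lt hjℓ hℓℓ1))]
          rcases lt_or_eq_of_le hjℓ with hjl | hjl
          · rw [hpag j hjl, hwtlow j hjl]
          · rw [hjl, hyℓeq, hwtℓ]
      · have hj0 : j ≠ 0 := by
          intro he
          rw [he] at hj
          exact not_lt_zero_fin ℓ1 hj
        rw [hBmid j hj0 (ne_of_gt hj)]
        exact hwthigh j hj

end LQAux
namespace LQAux
variable {n : ℕ} [NeZero n]
set_option linter.unusedSectionVars false

/-- Core lemma, case (c). -/
lemma coreC (hn : 2 ≤ n) {d : ℕ} {u v : Mon n} (hu : monDeg u = d) (hv : monDeg v = d)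
    (ha1 : 0 < u 0) (hc1 : v 0 + 1 = u 0)
    (hc2 : ∀ wt : Mon n, monDeg wt = d → toLex wt < toLex v →
      (∀ w' : Mon n, monDeg w' = d → toLex w' < toLex v → toLex w' ≤ toLex wt) →
      toLex (wt + Finsupp.single 0 1 - Finsupp.single (maxVar wt) 1) ≤ toLex u)
    {z w : Mon n} (hz : z ∈ lexSeg d u v) (hw : w ∈ lexSeg d u v) (hzw : prec z w) :
    ∃ t, w t < z t ∧ ∃ z', z' ∈ lexSeg d u v ∧ prec z' w ∧
      z' ≤ w + Finsupp.single t 1 := by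
  obtain ⟨hzd, hvz, hzu⟩ := hz
  obtain ⟨hwd, hvw, hwu⟩ := hw
  have hw0le : w 0 ≤ u 0 := head_le hwu
  have hw0ge : v 0 ≤ w 0 := head_le hvw
  have hz0ge : v 0 ≤ z 0 := head_le hvz
  have hz0le : z 0 ≤ u 0 := head_le hzu
  by_cases hup : w 0 = u 0
  · -- upper slice
    have hA : w 0 = v 0 + 1 := by omega
    have h0w : 0 < w 0 := by omega
    have hzne : z ≠ w := by
      intro he
      rcases hzw with h | ⟨_, h⟩
      · rw [he] at h; omega
      · rw [he] at h; exact lt_irrefl _ h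
    obtain ⟨t, ht, htmin⟩ := min_exceed (exists_exceed hzne (hzd.trans hwd.symm))
    have ht0 : t ≠ 0 := fun he => by rw [he] at ht; omega
    by_cases hvy : toLex v ≤ toLex (swap w t 0)
    · exact ⟨t, ht, swap w t 0,
        ⟨(monDeg_swap w ht0 h0w).trans hwd, hvy,
         le_trans (le_of_lt (swap_down_lt w ht0 h0w)) hwu⟩,
        Or.inl (by rw [swap_apply_i w ht0]; omega), swap_le w t 0⟩
    · rw [not_le] at hvy
      by_cases hexj : ∃ j, t < j ∧ 0 < w j
      · obtain ⟨j0, hj0t, hj0w⟩ := hexj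
        have hj00 : j0 ≠ 0 := fun he => by rw [he] at hj0t; exact not_lt_zero_fin t hj0t
        have hyj0 : 0 < swap w t 0 j0 := by
          rw [swap_apply_ne w (ne_of_gt hj0t) hj00]; exact hj0w
        set q := maxVar (swap w t 0) with hq
        have hqt : t < q := lt_of_lt_of_le hj0t (maxVar_ge hyj0)
        have hq0 : q ≠ 0 := fun he => by rw [he] at hqt; exact not_lt_zero_fin t hqt
        have hyq : 0 < swap w t 0 q := maxVar_pos hyj0
        have hwq : 0 < w q := by
          rwa [swap_apply_ne w (ne_of_gt hqt) hq0] at hyq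
        refine ⟨t, ht, swap w t q,
          ⟨(monDeg_swap w (ne_of_lt hqt) hwq).trans hwd,
           le_trans hvw (le_of_lt (lt_swap_up w hqt)),
           coreC_big hn hu hv hc2 hwd hA ht0 hvy hq hqt⟩,
          Or.inr ⟨swap_apply_ne w (fun he => ht0 he.symm) (fun he => hq0 he.symm),
            lt_swap_up w hqt⟩,
          swap_le w t q⟩
      · push_neg at hexj
        exfalso
        have hz0 : z 0 = v 0 := by
          rcases Nat.lt_or_ge (z 0) (w 0) with h | h
          · omega
          · exfalso
            have hz0w : z 0 = w 0 := by omega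
            have hlt : toLex w < toLex z := by
              rcases hzw with h' | ⟨_, h'⟩
              · omega
              · exact h'
            obtain ⟨t', ag', lt'⟩ := lexlt_def.1 hlt
            have htt' : t = t' := by
              rcases lt_trichotomy t t' with hh | hh | hh
              · have := ag' t hh; omega
              · exact hh
              · have := htmin t' hh; omega
            subst htt'
            have := sum_lt_of_agree ag' lt' (fun j hj => by have := hexj j hj; omega)
            omega
        have hyz : toLex (swap w t 0) < toLex z := lt_of_lt_of_le hvy hvz
        obtain ⟨p, hp1, hp2⟩ := lexlt_def.1 hyz
        have hp0 : p ≠ 0 := by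
          intro he
          rw [he, swap_apply_i w ht0] at hp2
          omega
        have hpt : ¬ p < t := by
          intro hpt
          rw [swap_apply_ne w (ne_of_lt hpt) hp0] at hp2
          have := htmin p hpt
          omega
        have hcon : monDeg (swap w t 0) < monDeg z := by
          refine sum_lt_of_agree hp1 hp2 (fun j hj => ?_)
          have hjt : t < j := lt_of_le_of_lt (not_lt.1 hpt) hj
          rw [swap_apply_ne w (ne_of_gt hjt)
            (fun (he : j = (0 : Fin n)) => not_lt_zero_fin t (he ▸ hjt))]
          have := hexj j hjt
          omega
        rw [monDeg_swap w ht0 h0w] at hcon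
        omega
  · -- lower slice: w 0 = v 0
    have hw0 : w 0 = v 0 := by omega
    rcases hzw with h0 | ⟨hz0, hlt⟩
    · omega
    · obtain ⟨t, ht, ht0, hag, htM, hM⟩ := same_head (hzd.trans hwd.symm) hz0 hlt
      have hM0 : (0 : Fin n) ≠ maxVar w := by
        intro he
        rw [← he] at htM
        exact not_lt_zero_fin t htM
      refine ⟨t, ht, swap w t (maxVar w),
        ⟨(monDeg_swap w (ne_of_lt htM) hM).trans hwd,
         le_trans hvw (le_of_lt (lt_swap_up w htM)), ?_⟩,
        Or.inr ⟨swap_apply_ne w (fun he => ht0 he.symm) hM0, lt_swap_up w htM⟩,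
        swap_le w t (maxVar w)⟩
      refine le_of_lt (head_lt ?_)
      rw [swap_apply_ne w (fun he => ht0 he.symm) hM0]
      omega

end LQAux
/-- A completely lexsegment ideal satisfying one of the three conditions (a), (b), (c)
characterizing linear resolution has linear quotients with respect to the order `≺`. -/
theorem completely_lexsegment_linear_resolution_implies_linear_quotients
    {n : ℕ} [NeZero n] (hn : 2 ≤ n) (k : Type*) [Field k] (d : ℕ) (hd : 2 ≤ d)
    (u v : Mon n) (hu : monDeg u = d) (hv : monDeg v = d)
    (ha1 : 0 < u 0) (huv : toLex v ≤ toLex u)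
    (hcl : IsCompletelyLexSeg (lexSeg d u v))
    (habc :
      (∃ a : ℕ, 0 < a ∧ a ≤ d ∧
          u = Finsupp.single 0 a + Finsupp.single (⟨1, by omega⟩ : Fin n) (d - a) ∧
          v = Finsupp.single 0 a + Finsupp.single (⟨n - 1, by omega⟩ : Fin n) (d - a)) ∨
      (v 0 + 1 < u 0) ∨
      (v 0 + 1 = u 0 ∧ ∀ w : Mon n, monDeg w = d → toLex w < toLex v →
        (∀ w' : Mon n, monDeg w' = d → toLex w' < toLex v → toLex w' ≤ toLex w) →
        toLex (w + Finsupp.single 0 1 - Finsupp.single (maxVar w) 1) ≤ toLex u)) :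
    hasLinearQuotientsWrt k (lexSeg d u v) prec := by
  classical
  intro w hw
  have hcore : ∀ z ∈ lexSeg d u v, prec z w → ∃ t, w t < z t ∧
      ∃ z', z' ∈ lexSeg d u v ∧ prec z' w ∧ z' ≤ w + Finsupp.single t 1 := by
    intro z hz hzw
    rcases habc with ⟨a, ha, had, hue, hve⟩ | hb | ⟨hc1, hc2⟩
    · exact LQAux.coreA hn ha had hue hve hz hw hzw
    · exact LQAux.coreB ha1 hb hz hw hzw
    · exact LQAux.coreC hn hu hv ha1 hc1 hc2 hz hw hzw
  refine ⟨{s : Fin n | ∃ z', z' ∈ lexSeg d u v ∧ prec z' w ∧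
    z' ≤ w + Finsupp.single s 1}, ?_⟩
  apply le_antisymm
  · intro r hr
    rw [Ideal.mem_colon_span_singleton, monomialIdeal,
      MvPolynomial.mem_ideal_span_monomial_image] at hr
    rw [MvPolynomial.mem_ideal_span_X_image]
    intro m hm
    have hmw : m + w ∈ (r * monomial w (1 : k)).support := by
      rw [MvPolynomial.mem_support_iff, MvPolynomial.coeff_mul_monomial, mul_one]
      exact MvPolynomial.mem_support_iff.1 hm
    obtain ⟨zz, hzT, hzle⟩ := hr _ hmw
    obtain ⟨hzL, hzprec⟩ := hzT
    obtain ⟨t, ht, z', hz'⟩ := hcore zz hzL hzprec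
    refine ⟨t, ⟨z', hz'⟩, ?_⟩
    have h1 := (Finsupp.le_def.1 hzle) t
    simp only [Finsupp.add_apply] at h1
    omega
  · rw [Ideal.span_le]
    rintro x ⟨s, hs, rfl⟩
    obtain ⟨z', hz'L, hz'p, hz'le⟩ := hs
    rw [SetLike.mem_coe, Ideal.mem_colon_span_singleton]
    show (X s : MvPolynomial (Fin n) k) * monomial w 1 ∈ _
    rw [show (X s : MvPolynomial (Fin n) k) = monomial (Finsupp.single s 1) 1 by
      rw [← MvPolynomial.X_pow_eq_monomial, pow_one]]
    rw [MvPolynomial.monomial_mul, one_mul, monomialIdeal,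
      MvPolynomial.mem_ideal_span_monomial_image]
    intro xi hxi
    rw [MvPolynomial.support_monomial, if_neg one_ne_zero, Finset.mem_singleton] at hxi
    subst hxi
    exact ⟨z', ⟨hz'L, hz'p⟩, by rwa [add_comm]⟩
end

section
/- Let m = x_1^{a_1}···x_n^{a_n} and m' = x_1^{b_1}···x_n^{b_n} be two monomials of the same degree d ≥ 1. If m ≤_lex m', then m/x_{max(m)} ≤_lex m'/x_{max(m')}. -/
open MvPolynomial

private lemma maxVar_mem {n : ℕ} [NeZero n] {m : Mon n} (h : m ≠ 0) : maxVar m ∈ m.support := by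
  obtain ⟨a, ha⟩ := Finset.max_of_nonempty (Finsupp.support_nonempty_iff.mpr h)
  have := Finset.mem_of_max ha
  unfold maxVar
  rw [ha]
  simpa using this

private lemma le_maxVar {n : ℕ} [NeZero n] {m : Mon n} {j : Fin n} (h : j ∈ m.support) :
    j ≤ maxVar m := by
  obtain ⟨a, ha⟩ := Finset.max_of_nonempty ⟨j, h⟩
  have hj := Finset.le_max h
  rw [ha] at hj
  unfold maxVar
  rw [ha]
  simpa using hj

private lemma eq_zero_of_maxVar_lt {n : ℕ} [NeZero n] {m : Mon n} {j : Fin n}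
    (h : maxVar m < j) : m j = 0 := by
  by_contra hne
  exact absurd (le_maxVar (Finsupp.mem_support_iff.mpr hne)) (not_le.mpr h)

private lemma sum_trichotomy {n : ℕ} (F : Fin n → ℕ) (i : Fin n) :
    ∑ j, F j = (∑ j ∈ Finset.univ.filter (· < i), F j) + F i
      + ∑ j ∈ Finset.univ.filter (fun j => i < j), F j := by
  classical
  rw [← Finset.sum_filter_add_sum_filter_not Finset.univ (· < i) F]
  have h1 : Finset.univ.filter (fun j : Fin n => ¬ j < i)
      = insert i (Finset.univ.filter (fun j => i < j)) := by
    ext j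
    simp only [Finset.mem_filter, Finset.mem_univ, true_and, Finset.mem_insert, not_lt]
    constructor
    · intro hle
      rcases eq_or_lt_of_le hle with h | h
      · exact Or.inl h.symm
      · exact Or.inr h
    · rintro (rfl | h)
      · exact le_refl _
      · exact le_of_lt h
  rw [h1, Finset.sum_insert (by simp), add_assoc]

/-- If `m ≤_lex m'` are monomials of the same degree `d ≥ 1`, then
`m / x_{max(m)} ≤_lex m' / x_{max(m')}`. -/
theorem lex_div_maxVar_le {n : ℕ} [NeZero n] (hn : 2 ≤ n) (d : ℕ) (hd : 1 ≤ d)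
    (m m' : Mon n) (hm : monDeg m = d) (hm' : monDeg m' = d) (h : toLex m ≤ toLex m') :
    toLex (m - Finsupp.single (maxVar m) 1) ≤ toLex (m' - Finsupp.single (maxVar m') 1) := by
  classical
  rcases eq_or_lt_of_le h with heq | hlt
  · have : m = m' := toLex.injective heq
    subst this
    exact le_refl _
  rw [Finsupp.Lex.lt_iff] at hlt
  obtain ⟨i, hpre, hi⟩ := hlt
  simp only [ofLex_toLex] at hpre hi
  set p := maxVar m with hp
  set q := maxVar m' with hq
  -- basic facts
  have hm'i : i ∈ m'.support := Finsupp.mem_support_iff.mpr (by omega)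
  have hiq : i ≤ q := le_maxVar hm'i
  have hmne : m ≠ 0 := by
    intro h0
    rw [h0] at hm
    simp [monDeg] at hm
    omega
  have hpmem : p ∈ m.support := maxVar_mem hmne
  have hmp : 1 ≤ m p := Nat.one_le_iff_ne_zero.mpr (Finsupp.mem_support_iff.mp hpmem)
  -- i < p
  have hip : i < p := by
    by_contra hle
    push_neg at hle
    have hzero : ∀ j : Fin n, i < j → m j = 0 := fun j hj =>
      eq_zero_of_maxVar_lt (lt_of_le_of_lt hle hj)
    have hlt2 : ∑ j, m j < ∑ j, m' j := by
      apply Finset.sum_lt_sum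
      · intro j _
        rcases lt_trichotomy j i with hji | hji | hji
        · exact le_of_eq (hpre j hji)
        · subst hji; exact le_of_lt hi
        · rw [hzero j hji]; exact Nat.zero_le _
      · exact ⟨i, Finset.mem_univ i, hi⟩
    rw [show ∑ j, m j = monDeg m from rfl, show ∑ j, m' j = monDeg m' from rfl, hm, hm'] at hlt2
    omega
  -- entries below i agree after subtraction
  have hbelow : ∀ j : Fin n, j < i →
      (m - Finsupp.single p 1 : Mon n) j = (m' - Finsupp.single q 1 : Mon n) j := by
    intro j hj
    rw [Finsupp.tsub_apply, Finsupp.tsub_apply,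
      Finsupp.single_eq_of_ne (ne_of_gt (lt_trans hj hip)).symm,
      Finsupp.single_eq_of_ne (ne_of_gt (lt_of_lt_of_le hj hiq)).symm, hpre j hj]
  rcases eq_or_lt_of_le hiq with hqi | hqi
  · -- q = i : the maximal variable of m' is i
    have hz' : ∀ j : Fin n, i < j → m' j = 0 := fun j hj =>
      eq_zero_of_maxVar_lt (show q < j from hqi ▸ hj)
    rcases eq_or_lt_of_le (Nat.succ_le_of_lt hi) with hsucc | hsucc
    · -- m i + 1 = m' i : we show the finsupps are equal
      -- first: ∑_{j > i} m j = 1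
      have hsum := sum_trichotomy (fun j => m j) i
      have hsum' := sum_trichotomy (fun j => m' j) i
      have hA : (∑ j ∈ Finset.univ.filter (· < i), m j)
          = ∑ j ∈ Finset.univ.filter (· < i), m' j :=
        Finset.sum_congr rfl (fun j hj => hpre j (by simpa using hj))
      have hB : (∑ j ∈ Finset.univ.filter (fun j => i < j), m' j) = 0 :=
        Finset.sum_eq_zero (fun j hj => hz' j (by simpa using hj))
      have htot : monDeg m = monDeg m' := by rw [hm, hm']
      have hS : (∑ j ∈ Finset.univ.filter (fun j => i < j), m j) = 1 := by
        have e1 : monDeg m = (∑ j ∈ Finset.univ.filter (· < i), m j) + m i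
            + ∑ j ∈ Finset.univ.filter (fun j => i < j), m j := hsum
        have e2 : monDeg m' = (∑ j ∈ Finset.univ.filter (· < i), m' j) + m' i
            + ∑ j ∈ Finset.univ.filter (fun j => i < j), m' j := hsum'
        omega
      have hpfil : p ∈ Finset.univ.filter (fun j => i < j) := by
        simp [hip]
      have hrest := Finset.add_sum_erase _ (fun j => m j) hpfil
      have hmp1 : m p = 1 := by
        have hle1 : m p ≤ 1 := by omega
        omega
      have hzrest : ∀ j ∈ (Finset.univ.filter (fun j => i < j)).erase p, m j = 0 := by
        rw [← Finset.sum_eq_zero_iff]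
        omega
      have heqf : m - Finsupp.single p 1 = m' - Finsupp.single q 1 := by
        ext j
        rcases lt_trichotomy j i with hj | hj | hj
        · exact hbelow j hj
        · subst hj
          rw [Finsupp.tsub_apply, Finsupp.tsub_apply,
            Finsupp.single_eq_of_ne (ne_of_gt hip).symm, ← hqi, Finsupp.single_eq_same]
          omega
        · rw [Finsupp.tsub_apply, Finsupp.tsub_apply, hz' j hj]
          by_cases hjp : j = p
          · subst hjp
            rw [Finsupp.single_eq_same, hmp1]
            simp
          · rw [Finsupp.single_eq_of_ne (fun hpj => hjp hpj),
              hzrest j (Finset.mem_erase.mpr ⟨hjp, by simp [hj]⟩)]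
            simp
      rw [heqf]
    · -- m i + 1 < m' i : strict inequality at position i
      apply le_of_lt
      rw [Finsupp.Lex.lt_iff]
      refine ⟨i, fun j hj => by simpa using hbelow j hj, ?_⟩
      simp only [ofLex_toLex]
      rw [Finsupp.tsub_apply, Finsupp.tsub_apply,
        Finsupp.single_eq_of_ne (ne_of_gt hip).symm, ← hqi, Finsupp.single_eq_same]
      omega
  · -- i < q : strict inequality at position i
    apply le_of_lt
    rw [Finsupp.Lex.lt_iff]
    refine ⟨i, fun j hj => by simpa using hbelow j hj, ?_⟩
    simp only [ofLex_toLex]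
    rw [Finsupp.tsub_apply, Finsupp.tsub_apply,
      Finsupp.single_eq_of_ne (ne_of_gt hip).symm, Finsupp.single_eq_of_ne (ne_of_gt hqi).symm]
    omega
end

section
/- Let 2 ≤ l ≤ n−1, let u = x_1·x_{l+1}^{a_{l+1}}···x_n^{a_n} and v = x_l·x_n^{d-1} be monomials of degree d (this is the form of the ends of a lexsegment which is not a completely lexsegment but generates an ideal with linear resolution), and let I = (L(u,v)). Order the minimal generators of I as g_1, …, g_m, h_1, …, h_p, where g_1, …, g_m are the monomials of L(u,v) not divisible by x_1 arranged in decreasing lexicographic order (with x_1 > … > x_n), and h_1, …, h_p are the monomials of L(u,v) divisible by x_1 arranged in decreasing order with respect to the lexicographic order induced by x_n > x_{n-1} > … > x_1. Then I has linear quotients with respect to this ordering. -/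
open MvPolynomial

/-- The ordering of the generators used for non-completely lexsegment ideals with linear
resolution: first the generators not divisible by `x_1`, in decreasing lexicographic order
(`x_1 > ⋯ > x_n`), then the generators divisible by `x_1`, in decreasing order with respect
to the lexicographic order induced by `x_n > x_{n-1} > ⋯ > x_1`. -/
def precNC {n : ℕ} [NeZero n] (z w : Mon n) : Prop :=
  (z 0 = 0 ∧ 0 < w 0) ∨
  (z 0 = 0 ∧ w 0 = 0 ∧ toLex w < toLex z) ∨
  (0 < z 0 ∧ 0 < w 0 ∧ toLex (revMon w) < toLex (revMon z))

namespace NCLQ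

open Finset

lemma lexlt_iff {n : ℕ} {a b : Fin n →₀ ℕ} :
    toLex a < toLex b ↔ ∃ j, (∀ d, d < j → a d = b d) ∧ a j < b j := Iff.rfl

lemma revMon_apply {n : ℕ} (a : Mon n) (j : Fin n) : revMon a j = a j.rev := by
  simp [revMon, Finsupp.equivMapDomain_apply]

lemma revlt_iff {n : ℕ} {a b : Mon n} :
    toLex (revMon a) < toLex (revMon b) ↔ ∃ t, (∀ d, t < d → a d = b d) ∧ a t < b t := by
  rw [lexlt_iff]
  constructor
  · rintro ⟨j, hj, h⟩
    refine ⟨j.rev, fun d hd => ?_, by simpa [revMon_apply] using h⟩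
    have h2 : d.rev < j := by
      rw [← Fin.rev_rev j]; exact Fin.rev_lt_rev.mpr hd
    simpa [revMon_apply, Fin.rev_rev] using hj d.rev h2
  · rintro ⟨t, ht, h⟩
    refine ⟨t.rev, fun d hd => ?_, by simpa [revMon_apply] using h⟩
    have h2 : t < d.rev := by
      rw [← Fin.rev_rev t]; exact Fin.rev_lt_rev.mpr hd
    simpa [revMon_apply] using ht d.rev h2

lemma monDeg_add {n : ℕ} (a b : Mon n) : monDeg (a + b) = monDeg a + monDeg b := by
  simp [monDeg, Finsupp.add_apply, Finset.sum_add_distrib]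

lemma monDeg_single {n : ℕ} (i : Fin n) (c : ℕ) : monDeg (Finsupp.single i c) = c := by
  simp [monDeg, Finsupp.single_apply]

lemma sum_split {n : ℕ} (f : Fin n → ℕ) (s : Fin n) :
    ∑ j, f j = (∑ j ∈ univ.filter (· < s), f j) + f s + ∑ j ∈ univ.filter (s < ·), f j := by
  rw [← Finset.sum_filter_add_sum_filter_not univ (· < s) f]
  have h2 : univ.filter (fun j => ¬ j < s) = insert s (univ.filter (fun j => s < j)) := by
    ext j
    simp only [mem_filter, mem_univ, true_and, mem_insert, not_lt]
    constructor
    · intro h; rcases eq_or_lt_of_le h with h|h; exacts [Or.inl h.symm, Or.inr h]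
    · rintro (rfl|h); exacts [le_refl _, le_of_lt h]
  rw [h2, Finset.sum_insert (by simp)]
  ring

lemma swap_apply {n : ℕ} (w : Mon n) (s t a : Fin n) :
    ((w + Finsupp.single s 1 - Finsupp.single t 1 : Mon n)) a
      = w a + (if s.val = a.val then 1 else 0) - (if t.val = a.val then 1 else 0) := by
  simp [Finsupp.add_apply, Finsupp.tsub_apply, Finsupp.single_apply, Fin.ext_iff]

lemma single_apply' {n : ℕ} (s a : Fin n) (c : ℕ) :
    (Finsupp.single s c : Mon n) a = if s.val = a.val then c else 0 := by
  simp [Finsupp.single_apply, Fin.ext_iff]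

lemma swap_add {n : ℕ} (w : Mon n) (s t : Fin n) (hst : s ≠ t) (hwt : 1 ≤ w t) :
    (w + Finsupp.single s 1 - Finsupp.single t 1) + Finsupp.single t 1
      = w + Finsupp.single s 1 := by
  have hst' : s.val ≠ t.val := fun h => hst (Fin.ext h)
  ext a
  simp only [Finsupp.add_apply, swap_apply, single_apply']
  rcases eq_or_ne t a with rfl|hta
  · rw [if_pos rfl, if_neg hst']
    omega
  · rw [if_neg (fun h => hta (Fin.ext h))]
    omega

lemma swap_deg {n : ℕ} (w : Mon n) {s t : Fin n} (hst : s ≠ t) (hwt : 1 ≤ w t) :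
    monDeg (w + Finsupp.single s 1 - Finsupp.single t 1) = monDeg w := by
  have h := congrArg monDeg (swap_add w s t hst hwt)
  rw [monDeg_add, monDeg_add, monDeg_single, monDeg_single] at h
  omega

lemma swap_le {n : ℕ} (w : Mon n) {s t : Fin n} :
    w + Finsupp.single s 1 - Finsupp.single t 1 ≤ w + Finsupp.single s 1 := by
  rw [Finsupp.le_def]
  intro a
  rw [swap_apply, Finsupp.add_apply, single_apply']
  split_ifs <;> omega

lemma add_single_apply {n : ℕ} (w : Mon n) (s a : Fin n) :
    (w + Finsupp.single s 1 : Mon n) a = w a + if s.val = a.val then 1 else 0 := by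
  rw [Finsupp.add_apply, single_apply']


lemma toLex_le_cases {n : ℕ} {a b : Mon n} (h : toLex a ≤ toLex b) :
    toLex a < toLex b ∨ a = b := by
  rcases h.lt_or_eq with h|h
  · exact Or.inl h
  · exact Or.inr (by exact_mod_cast h)

lemma ub_struct {n : ℕ} [NeZero n] {l : ℕ} (hl : 2 ≤ l) {u m : Mon n}
    (hu0 : u 0 = 1) (huMid : ∀ i : Fin n, 1 ≤ i.val → i.val ≤ l - 1 → u i = 0)
    (hm : toLex m ≤ toLex u) (hm0 : m 0 ≠ 0) :
    m 0 = 1 ∧ ∀ j : Fin n, 1 ≤ j.val → j.val ≤ l - 1 → m j = 0 := by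
  rcases toLex_le_cases hm with h|h
  · obtain ⟨i, hbef, hi⟩ := lexlt_iff.mp h
    rcases eq_or_ne i 0 with rfl|hi0
    · rw [hu0] at hi; omega
    · have hiv : 1 ≤ i.val := by
        rcases Nat.eq_zero_or_pos i.val with h0|h0
        · exact absurd (Fin.ext (by simp [h0]) : i = 0) hi0
        · exact h0
      have h0lt : (0 : Fin n) < i := by rw [Fin.lt_def, Fin.val_zero]; omega
      refine ⟨by rw [hbef 0 h0lt, hu0], fun j hj1 hj2 => ?_⟩
      rcases lt_or_ge j i with hji|hij
      · rw [hbef j hji]; exact huMid j hj1 hj2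
      · exfalso
        have : u i = 0 := huMid i hiv (le_trans (Fin.le_def.mp hij) hj2)
        omega
  · subst h; exact ⟨hu0, huMid⟩

lemma monomial_mem_monomialIdeal {n : ℕ} {k : Type*} [Field k] {T : Set (Mon n)} {a : Mon n}
    (h : ∃ t ∈ T, t ≤ a) : (monomial a (1:k)) ∈ monomialIdeal k T := by
  rw [monomialIdeal, mem_ideal_span_monomial_image]
  intro xi hxi
  classical
  rw [support_monomial, if_neg one_ne_zero, Finset.mem_singleton] at hxi
  subst hxi
  exact h


lemma fin_pos_of_ne_zero {n : ℕ} [NeZero n] {i : Fin n} (h : i ≠ 0) : (0:Fin n) < i := by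
  rw [Fin.lt_def, Fin.val_zero]
  exact Nat.pos_of_ne_zero (fun hh => h (Fin.ext (by rw [hh, Fin.val_zero])))

lemma star {n : ℕ} [NeZero n] (d : ℕ) (hd : 2 ≤ d) (l : ℕ) (hl : 2 ≤ l)
    (hln : l ≤ n - 1) (hn3 : 3 ≤ n) (u : Mon n) (hu : monDeg u = d) (hu0 : u 0 = 1)
    (huMid : ∀ i : Fin n, 1 ≤ i.val → i.val ≤ l - 1 → u i = 0)
    (v : Mon n)
    (hv : v = Finsupp.single (⟨l - 1, by omega⟩ : Fin n) 1 +
      Finsupp.single (⟨n - 1, by omega⟩ : Fin n) (d - 1))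
    {w z : Mon n} (hw : w ∈ lexSeg d u v) (hz : z ∈ lexSeg d u v) (hzw : precNC z w) :
    ∃ s : Fin n, ∃ z' : Mon n, w s < z s ∧ z' ∈ lexSeg d u v ∧ precNC z' w ∧
      z' ≤ w + Finsupp.single s 1 := by
  have hw' : monDeg w = d ∧ toLex v ≤ toLex w ∧ toLex w ≤ toLex u := hw
  have hz' : monDeg z = d ∧ toLex v ≤ toLex z ∧ toLex z ≤ toLex u := hz
  obtain ⟨hwdeg, hwv, hwu⟩ := hw'
  obtain ⟨hzdeg, hzv, hzu⟩ := hz'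
  have hva : ∀ a : Fin n, v a = (if l - 1 = a.val then 1 else 0) +
      (if n - 1 = a.val then d - 1 else 0) := by
    intro a
    rw [hv, Finsupp.add_apply, single_apply', single_apply']
  have hzw' : (z 0 = 0 ∧ 0 < w 0) ∨ (z 0 = 0 ∧ w 0 = 0 ∧ toLex w < toLex z) ∨
      (0 < z 0 ∧ 0 < w 0 ∧ toLex (revMon w) < toLex (revMon z)) := hzw
  by_cases hw0 : w 0 = 0
  · -- CASE A : w not divisible by x_1
    have hzw2 : z 0 = 0 ∧ toLex w < toLex z := by
      rcases hzw' with h|h|h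
      · exact absurd h.2 (by omega)
      · exact ⟨h.1, h.2.2⟩
      · exact absurd h.2.1 (by omega)
    obtain ⟨hz0, hwz⟩ := hzw2
    obtain ⟨s, hsbef, hslt⟩ := lexlt_iff.mp hwz
    have hwsupp : w.support.Nonempty := by
      rw [Finsupp.support_nonempty_iff]
      intro h0
      rw [h0] at hwdeg
      simp [monDeg] at hwdeg
      omega
    set t := w.support.max' hwsupp with htdef
    have hwt : w t ≠ 0 := Finsupp.mem_support_iff.mp (w.support.max'_mem hwsupp)
    have htmax : ∀ j, t < j → w j = 0 := by
      intro j hj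
      by_contra hj0
      exact absurd (Finset.le_max' _ j (Finsupp.mem_support_iff.mpr hj0)) (not_le.mpr hj)
    have hst : s < t := by
      by_contra hts
      push_neg at hts
      have hlt : monDeg w < monDeg z := by
        unfold monDeg
        rw [sum_split (w ·) s, sum_split (z ·) s]
        have h1 : ∑ j ∈ univ.filter (· < s), w j = ∑ j ∈ univ.filter (· < s), z j :=
          Finset.sum_congr rfl fun j hj => hsbef j (by simpa using hj)
        have h3 : ∑ j ∈ univ.filter (s < ·), w j = 0 :=
          Finset.sum_eq_zero fun j hj => htmax j (lt_of_le_of_lt hts (by simpa using hj))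
        omega
      omega
    have hs0 : s ≠ 0 := by
      rintro rfl
      rw [hw0, hz0] at hslt
      exact lt_irrefl 0 hslt
    have ht0 : t ≠ 0 := fun h => hwt (h ▸ hw0)
    have hstne : s ≠ t := ne_of_lt hst
    have hz'lt : toLex w < toLex (w + Finsupp.single s 1 - Finsupp.single t 1) := by
      rw [lexlt_iff]
      refine ⟨s, fun dd hdd => ?_, ?_⟩
      · rw [swap_apply]
        have h1 : ¬ s.val = dd.val := fun h => (ne_of_lt hdd) (Fin.ext h.symm)
        have h2 : ¬ t.val = dd.val := fun h =>
          (ne_of_lt (lt_trans hdd hst)) (Fin.ext h.symm)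
        rw [if_neg h1, if_neg h2]
        omega
      · rw [swap_apply, if_pos rfl, if_neg (fun h => hstne (Fin.ext h).symm)]
        omega
    refine ⟨s, w + Finsupp.single s 1 - Finsupp.single t 1, hslt,
      ⟨?_, ?_, ?_⟩, ?_, swap_le w⟩
    · rw [swap_deg w hstne (Nat.one_le_iff_ne_zero.mpr hwt)]; exact hwdeg
    · exact le_trans hwv (le_of_lt hz'lt)
    · refine le_of_lt (lexlt_iff.mpr ⟨0, fun dd hdd => absurd hdd ?_, ?_⟩)
      · rw [Fin.lt_def, Fin.val_zero]; omega
      · rw [swap_apply, if_neg (fun h => hs0 (Fin.ext h)),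
          if_neg (fun h => ht0 (Fin.ext h)), hu0]
        omega
    · exact Or.inr (Or.inl ⟨by
        rw [swap_apply, if_neg (fun h => hs0 (Fin.ext h)),
          if_neg (fun h => ht0 (Fin.ext h))]
        omega, hw0, hz'lt⟩)
  · -- CASE B : w divisible by x_1
    obtain ⟨hw01, hwMid⟩ := ub_struct hl hu0 huMid hwu hw0
    have hlm : l - 1 < n := by omega
    have hnm : n - 1 < n := by omega
    have hmkl : ((⟨l - 1, hlm⟩ : Fin n) : ℕ) = l - 1 := rfl
    have hmkn : ((⟨n - 1, hnm⟩ : Fin n) : ℕ) = n - 1 := rfl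
    rcases hzw' with h|h|h
    · -- d1 : z not divisible by x_1
      obtain ⟨hz0, hw0pos⟩ := h
      have hexs : ∃ s : Fin n, 1 ≤ s.val ∧ s.val ≤ l - 1 ∧ z s ≠ 0 := by
        by_contra hc
        push_neg at hc
        have hzvlt : toLex z < toLex v := by
          rw [lexlt_iff]
          refine ⟨⟨l-1, hlm⟩, fun dd hdd => ?_, ?_⟩
          · have hddval : dd.val < l - 1 := Fin.lt_def.mp hdd
            have hzdd : z dd = 0 := by
              rcases Nat.eq_zero_or_pos dd.val with h0|h0
              · rw [show dd = 0 from Fin.ext (by rw [Fin.val_zero]; exact h0)]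
                exact hz0
              · exact hc dd h0 (by omega)
            rw [hzdd, hva]
            rw [if_neg (by omega), if_neg (by omega)]
          · rw [hva]
            rw [if_pos rfl, if_neg (by omega)]
            have hzl : z ⟨l-1, hlm⟩ = 0 := hc _ (by omega) (by omega)
            omega
        exact absurd hzvlt (not_lt.mpr hzv)
      obtain ⟨s, hs1, hs2, hzs⟩ := hexs
      have hws : w s = 0 := hwMid s hs1 hs2
      have hs0 : s ≠ 0 := by
        rintro rfl
        rw [Fin.val_zero] at hs1
        omega
      set z' := w + Finsupp.single s 1 - Finsupp.single 0 1 with hz'def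
      have hz'app : ∀ a : Fin n, z' a
          = w a + (if s.val = a.val then 1 else 0) - (if 0 = a.val then 1 else 0) := by
        intro a
        rw [hz'def, swap_apply, Fin.val_zero]
      have hz'0 : z' 0 = 0 := by
        rw [hz'app, Fin.val_zero]
        rw [if_neg (by omega), if_pos rfl]
        omega
      refine ⟨s, z', by rw [hws]; exact Nat.pos_of_ne_zero hzs, ⟨?_, ?_, ?_⟩, ?_, ?_⟩
      · rw [hz'def, swap_deg w hs0 (by omega)]; exact hwdeg
      · -- lower bound : toLex v ≤ toLex z'
        rcases lt_or_eq_of_le hs2 with hslt2|hseq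
        · -- s.val < l - 1 : strict
          refine le_of_lt (lexlt_iff.mpr ⟨s, fun dd hdd => ?_, ?_⟩)
          · have hddval : dd.val < s.val := Fin.lt_def.mp hdd
            rw [hva, hz'app]
            rcases Nat.eq_zero_or_pos dd.val with h0|h0
            · have hwdd : w dd = 1 := by
                rw [show dd = 0 from Fin.ext (by rw [Fin.val_zero]; exact h0)]
                exact hw01
              rw [hwdd]; split_ifs <;> omega
            · have hwdd : w dd = 0 := hwMid dd h0 (by omega)
              rw [hwdd]; split_ifs <;> omega
          · rw [hva, hz'app, hws]
            split_ifs <;> omega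
        · -- s.val = l - 1
          by_cases hcase : ∀ j : Fin n, l ≤ j.val → j.val ≤ n - 2 → w j = 0
          · -- z' = v
            have hwnm : w ⟨n-1, hnm⟩ = d - 1 := by
              have hsum := sum_split (w ·) ⟨n-1, hnm⟩
              have h1 : ∑ j ∈ univ.filter (· < (⟨n-1, hnm⟩ : Fin n)), w j = w 0 := by
                apply Finset.sum_eq_single_of_mem
                · rw [Finset.mem_filter]
                  exact ⟨Finset.mem_univ _, by rw [Fin.lt_def, Fin.val_zero]; omega⟩
                · intro b hb hb0
                  have hbval : b.val < n - 1 := Fin.lt_def.mp (Finset.mem_filter.mp hb).2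
                  have hbpos : 1 ≤ b.val := Nat.pos_of_ne_zero
                    (fun hh => hb0 (Fin.ext (by rw [hh, Fin.val_zero])))
                  rcases le_or_gt b.val (l-1) with hbl|hbl
                  · exact hwMid b hbpos hbl
                  · exact hcase b (by omega) (by omega)
              have h3 : ∑ j ∈ univ.filter ((⟨n-1, hnm⟩ : Fin n) < ·), w j = 0 := by
                apply Finset.sum_eq_zero
                intro j hj
                have hjv : n - 1 < j.val := Fin.lt_def.mp (Finset.mem_filter.mp hj).2
                exact absurd j.isLt (by omega)
              rw [hw01] at h1
              unfold monDeg at hwdeg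
              omega
            have hz'v : z' = v := by
              ext a
              rw [hz'app, hva]
              rcases Nat.eq_zero_or_pos a.val with h0|h0
              · have hwa : w a = 1 := by
                  rw [show a = 0 from Fin.ext (by rw [Fin.val_zero]; exact h0)]
                  exact hw01
                rw [hwa]; split_ifs <;> omega
              rcases eq_or_ne a.val (n-1) with h1|h1
              · have hwa : w a = d - 1 := by
                  rw [show a = (⟨n-1, hnm⟩ : Fin n) from Fin.ext h1]
                  exact hwnm
                rw [hwa]; split_ifs <;> omega
              · have hwa : w a = 0 := by
                  rcases le_or_gt a.val (l-1) with h2|h2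
                  · exact hwMid a h0 h2
                  · exact hcase a (by omega) (by omega)
                rw [hwa]; split_ifs <;> omega
            exact le_of_eq (congrArg toLex hz'v.symm)
          · push_neg at hcase
            obtain ⟨j0, hj0l, hj0n, hwj0⟩ := hcase
            have hFne : (univ.filter (fun j : Fin n =>
                l ≤ j.val ∧ j.val ≤ n - 2 ∧ w j ≠ 0)).Nonempty :=
              ⟨j0, by rw [Finset.mem_filter]; exact ⟨Finset.mem_univ _, hj0l, hj0n, hwj0⟩⟩
            set jm := (univ.filter (fun j : Fin n =>
                l ≤ j.val ∧ j.val ≤ n - 2 ∧ w j ≠ 0)).min' hFne with hjmdef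
            have hjmF : l ≤ jm.val ∧ jm.val ≤ n - 2 ∧ w jm ≠ 0 := by
              have := Finset.min'_mem _ hFne
              rw [Finset.mem_filter] at this
              exact this.2
            obtain ⟨hjml, hjmn, hjmw⟩ := hjmF
            have hjmmin : ∀ b : Fin n, b < jm → l ≤ b.val → b.val ≤ n - 2 → w b = 0 := by
              intro b hb hbl hbn
              by_contra hb0
              exact absurd (Finset.min'_le _ b
                (by rw [Finset.mem_filter]; exact ⟨Finset.mem_univ _, hbl, hbn, hb0⟩))
                (not_le.mpr hb)
            refine le_of_lt (lexlt_iff.mpr ⟨jm, fun dd hdd => ?_, ?_⟩)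
            · have hddval : dd.val < jm.val := Fin.lt_def.mp hdd
              rw [hva, hz'app]
              rcases Nat.eq_zero_or_pos dd.val with h0|h0
              · have hwdd : w dd = 1 := by
                  rw [show dd = 0 from Fin.ext (by rw [Fin.val_zero]; exact h0)]
                  exact hw01
                rw [hwdd]; split_ifs <;> omega
              rcases le_or_gt dd.val (l-1) with h2|h2
              · have hwdd : w dd = 0 := hwMid dd h0 h2
                rw [hwdd]; split_ifs <;> omega
              · have hwdd : w dd = 0 := hjmmin dd hdd (by omega) (by omega)
                rw [hwdd]; split_ifs <;> omega
            · rw [hva, hz'app]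
              split_ifs <;> omega
      · -- upper bound : z' <lex w ≤ u
        refine le_trans (le_of_lt (lexlt_iff.mpr ⟨0, fun dd hdd => absurd hdd ?_, ?_⟩)) hwu
        · rw [Fin.lt_def, Fin.val_zero]; omega
        · rw [hz'app, Fin.val_zero]
          rw [if_neg (by omega), if_pos rfl]
          omega
      · exact Or.inl ⟨hz'0, hw0pos⟩
      · rw [hz'def]; exact swap_le w
    · -- d2 impossible
      exact absurd h.2.1 (by omega)
    · -- d3 : both divisible by x_1
      obtain ⟨hz0pos, hw0pos, hrev⟩ := h
      have hz0ne : z 0 ≠ 0 := by omega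
      obtain ⟨hz01, hzMid⟩ := ub_struct hl hu0 huMid hzu hz0ne
      obtain ⟨t, htail, htlt⟩ := revlt_iff.mp hrev
      have ht0 : t ≠ 0 := by
        rintro rfl
        rw [hw01, hz01] at htlt
        exact lt_irrefl 1 htlt
      have hexj : ∃ j : Fin n, j ≠ 0 ∧ j < t ∧ w j ≠ 0 := by
        by_contra hc
        push_neg at hc
        have hlt : monDeg w < monDeg z := by
          unfold monDeg
          rw [sum_split (w ·) t, sum_split (z ·) t]
          have h1 : ∑ j ∈ univ.filter (· < t), w j = w 0 := by
            apply Finset.sum_eq_single_of_mem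
            · rw [Finset.mem_filter]
              exact ⟨Finset.mem_univ _, fin_pos_of_ne_zero ht0⟩
            · intro b hb hb0
              exact hc b hb0 (Finset.mem_filter.mp hb).2
          have h2 : z 0 ≤ ∑ j ∈ univ.filter (· < t), z j := by
            apply Finset.single_le_sum (fun (i : Fin n) _ => Nat.zero_le (z i))
            rw [Finset.mem_filter]
            exact ⟨Finset.mem_univ _, fin_pos_of_ne_zero ht0⟩
          have h3 : ∑ j ∈ univ.filter (t < ·), w j = ∑ j ∈ univ.filter (t < ·), z j :=
            Finset.sum_congr rfl fun j hj => htail j (by simpa using hj)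
          omega
        omega
      obtain ⟨j, hj0, hjt, hwj⟩ := hexj
      have hjtne : t ≠ j := (ne_of_lt hjt).symm
      set z' := w + Finsupp.single t 1 - Finsupp.single j 1 with hz'def
      have hz'app : ∀ a : Fin n, z' a
          = w a + (if t.val = a.val then 1 else 0) - (if j.val = a.val then 1 else 0) := by
        intro a
        rw [hz'def, swap_apply]
      have hz'0 : z' 0 = w 0 := by
        rw [hz'app]
        rw [if_neg (fun h => ht0 (Fin.ext h)), if_neg (fun h => hj0 (Fin.ext h))]
        omega
      refine ⟨t, z', htlt, ⟨?_, ?_, ?_⟩, ?_, ?_⟩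
      · rw [hz'def, swap_deg w hjtne (Nat.one_le_iff_ne_zero.mpr hwj)]; exact hwdeg
      · refine le_of_lt (lexlt_iff.mpr ⟨0, fun dd hdd => absurd hdd ?_, ?_⟩)
        · rw [Fin.lt_def, Fin.val_zero]; omega
        · rw [hva, hz'0, Fin.val_zero]
          rw [if_neg (by omega), if_neg (by omega)]
          omega
      · refine le_trans (le_of_lt (lexlt_iff.mpr ⟨j, fun dd hdd => ?_, ?_⟩)) hwu
        · rw [hz'app]
          rw [if_neg (fun h => (ne_of_lt (lt_trans hdd hjt)) (Fin.ext h.symm)),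
            if_neg (fun h => (ne_of_lt hdd) (Fin.ext h.symm))]
          omega
        · rw [hz'app, if_neg (fun h => hjtne (Fin.ext h)), if_pos rfl]
          omega
      · refine Or.inr (Or.inr ⟨by rw [hz'0]; omega, hw0pos, ?_⟩)
        rw [revlt_iff]
        refine ⟨t, fun dd hdd => ?_, ?_⟩
        · rw [hz'app]
          rw [if_neg (fun h => (ne_of_lt hdd) (Fin.ext h)),
            if_neg (fun h => (ne_of_lt (lt_trans hjt hdd)) (Fin.ext h))]
          omega
        · rw [hz'app, if_pos rfl, if_neg (fun h => hjtne (Fin.ext h.symm))]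
          omega
      · rw [hz'def]; exact swap_le w


lemma main_aux {n : ℕ} (k : Type*) [Field k] (T : Set (Mon n)) (r : Mon n → Mon n → Prop)
    (hstar : ∀ w ∈ T, ∀ z ∈ T, r z w →
      ∃ s : Fin n, ∃ z' : Mon n, w s < z s ∧ z' ∈ T ∧ r z' w ∧ z' ≤ w + Finsupp.single s 1) :
    hasLinearQuotientsWrt k T r := by
  intro w hw
  classical
  refine ⟨{s : Fin n | (monomial (w + Finsupp.single s 1) (1:k) : MvPolynomial (Fin n) k) ∈
      monomialIdeal k {z ∈ T | r z w}}, ?_⟩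
  apply le_antisymm
  · intro f hf
    have hfw : f * monomial w (1:k) ∈ monomialIdeal k {z ∈ T | r z w} := by
      have h1 : (monomial w (1:k) : MvPolynomial (Fin n) k) ∈
          Ideal.span {(monomial w (1:k) : MvPolynomial (Fin n) k)} :=
        Ideal.subset_span rfl
      have h2 := Submodule.mem_colon.mp hf _ h1
      rwa [smul_eq_mul] at h2
    rw [monomialIdeal, mem_ideal_span_monomial_image] at hfw
    rw [mem_ideal_span_X_image]
    intro m hm
    have hmw : m + w ∈ (f * monomial w (1:k)).support := by
      rw [mem_support_iff, coeff_mul_monomial]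
      rw [mem_support_iff] at hm
      simpa using hm
    obtain ⟨zz, hzzP, hzzle⟩ := hfw _ hmw
    obtain ⟨s, z', hs, hz'T, hz'r, hz'le⟩ := hstar w hw zz hzzP.1 hzzP.2
    refine ⟨s, ?_, ?_⟩
    · exact monomial_mem_monomialIdeal ⟨z', ⟨hz'T, hz'r⟩, hz'le⟩
    · have h4 := Finsupp.le_def.mp hzzle s
      rw [Finsupp.add_apply] at h4
      omega
  · rw [Ideal.span_le]
    rintro x ⟨s, hsV, rfl⟩
    rw [SetLike.mem_coe, Submodule.mem_colon]
    intro p hp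
    obtain ⟨g, rfl⟩ := Ideal.mem_span_singleton'.mp hp
    rw [smul_eq_mul]
    have hX : (X s : MvPolynomial (Fin n) k) * monomial w 1
        = monomial (w + Finsupp.single s 1) 1 := by
      rw [add_comm, monomial_single_add, pow_one]
    have hmul : (X s : MvPolynomial (Fin n) k) * (g * monomial w 1)
        = g * monomial (w + Finsupp.single s 1) 1 := by rw [← hX]; ring
    rw [hmul]
    exact Ideal.mul_mem_left _ g hsV

end NCLQ

/-- A non-completely lexsegment ideal with linear resolution, i.e. one with ends
`u = x_1 x_{l+1}^{a_{l+1}} ⋯ x_n^{a_n}` and `v = x_l x_n^{d-1}` for some `2 ≤ l ≤ n-1`,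
has linear quotients with respect to the ordering `precNC` of its minimal generators. -/
theorem noncompletely_lexsegment_linear_quotients {n : ℕ} [NeZero n] (hn : 2 ≤ n)
    (k : Type*) [Field k] (d : ℕ) (hd : 2 ≤ d) (l : ℕ) (hl : 2 ≤ l) (hln : l ≤ n - 1)
    (u : Mon n) (hu : monDeg u = d) (hu0 : u 0 = 1)
    (huMid : ∀ i : Fin n, 1 ≤ i.val → i.val ≤ l - 1 → u i = 0) :
    hasLinearQuotientsWrt k
      (lexSeg d u (Finsupp.single (⟨l - 1, by omega⟩ : Fin n) 1 +
        Finsupp.single (⟨n - 1, by omega⟩ : Fin n) (d - 1)))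
      precNC := by
  have hn3 : 3 ≤ n := by omega
  exact NCLQ.main_aux k _ precNC (fun w hw z hz hzw =>
    NCLQ.star d hd l hl hln hn3 u hu hu0 huMid _ rfl hw hz hzw)
end

section
/- Let u = x_1^{a_1}···x_n^{a_n} with a_1 > 1 and u ≠ x_1^d, and let v = x_q^{b_q}···x_n^{b_n} with 1 < q < n and b_q > 0, be monomials of degree d with u ≥_lex v, and let I = (L(u,v)). Then the minimal prime ideals of I are exactly (x_1, …, x_q) and (x_2, …, x_n). -/
open MvPolynomial

section Aux

open Classical in
/-- The algebra map killing the variables in `V`. -/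
noncomputable def killV {n : ℕ} (k : Type*) [Field k] (V : Set (Fin n)) :
    MvPolynomial (Fin n) k →ₐ[k] MvPolynomial (Fin n) k :=
  aeval (fun i => if i ∈ V then 0 else X i)

lemma sub_killV_mem {n : ℕ} {k : Type*} [Field k] (V : Set (Fin n))
    (p : MvPolynomial (Fin n) k) :
    p - killV k V p ∈ Ideal.span ((fun i => (X i : MvPolynomial (Fin n) k)) '' V) := by
  classical
  induction p using MvPolynomial.induction_on with
  | C a => simp [killV]
  | add p q hp hq =>
      have := Ideal.add_mem _ hp hq
      rwa [sub_add_sub_comm, ← map_add] at this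
  | mul_X p i hp =>
      by_cases hi : i ∈ V
      · have h0 : killV k V (p * X i) = 0 := by
          simp [killV, hi]
        rw [h0, sub_zero]
        exact Ideal.mul_mem_left _ p (Ideal.subset_span ⟨i, hi, rfl⟩)
      · have h0 : killV k V (p * X i) = killV k V p * X i := by
          simp [killV, hi]
        rw [h0]
        have : p * X i - killV k V p * X i = (p - killV k V p) * X i := by ring
        rw [this]
        exact Ideal.mul_mem_right _ _ hp

lemma mem_span_X_iff_killV {n : ℕ} {k : Type*} [Field k] (V : Set (Fin n))
    (p : MvPolynomial (Fin n) k) :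
    p ∈ Ideal.span ((fun i => (X i : MvPolynomial (Fin n) k)) '' V) ↔ killV k V p = 0 := by
  classical
  constructor
  · intro hp
    have hle : Ideal.span ((fun i => (X i : MvPolynomial (Fin n) k)) '' V) ≤
        RingHom.ker (killV k V).toRingHom := by
      rw [Ideal.span_le]
      rintro _ ⟨i, hi, rfl⟩
      simp [RingHom.mem_ker, killV, hi]
    exact hle hp
  · intro hp
    have := sub_killV_mem V p
    rwa [hp, sub_zero] at this

lemma span_X_isPrime {n : ℕ} (k : Type*) [Field k] (V : Set (Fin n)) :
    (Ideal.span ((fun i => (X i : MvPolynomial (Fin n) k)) '' V)).IsPrime := by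
  constructor
  · intro h
    have h1 : (1 : MvPolynomial (Fin n) k) ∈
        Ideal.span ((fun i => (X i : MvPolynomial (Fin n) k)) '' V) := by
      rw [h]; trivial
    rw [mem_span_X_iff_killV, map_one] at h1
    exact one_ne_zero h1
  · intro a b hab
    rw [mem_span_X_iff_killV, map_mul] at hab
    rcases mul_eq_zero.mp hab with h | h
    · exact Or.inl ((mem_span_X_iff_killV V a).mpr h)
    · exact Or.inr ((mem_span_X_iff_killV V b).mpr h)

lemma X_mem_span_X_iff {n : ℕ} {k : Type*} [Field k] {V : Set (Fin n)} {j : Fin n} :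
    (X j : MvPolynomial (Fin n) k) ∈
      Ideal.span ((fun i => (X i : MvPolynomial (Fin n) k)) '' V) ↔ j ∈ V := by
  constructor
  · intro h
    rw [show ((fun i => (X i : MvPolynomial (Fin n) k)) '' V) = X '' V from rfl,
      mem_ideal_span_X_image] at h
    obtain ⟨i, hi, hne⟩ := h (Finsupp.single j 1) (by simp [support_X])
    rcases Finsupp.single_apply_ne_zero.mp hne with ⟨h1, _⟩
    exact h1 ▸ hi
  · intro h
    exact Ideal.subset_span ⟨j, h, rfl⟩

lemma monomial_mem_span_X_iff {n : ℕ} {k : Type*} [Field k] {V : Set (Fin n)} {m : Mon n} :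
    (monomial m (1 : k) : MvPolynomial (Fin n) k) ∈
      Ideal.span ((fun i => (X i : MvPolynomial (Fin n) k)) '' V) ↔ ∃ i ∈ V, m i ≠ 0 := by
  classical
  rw [show ((fun i => (X i : MvPolynomial (Fin n) k)) '' V) = X '' V from rfl,
    mem_ideal_span_X_image]
  constructor
  · intro h; exact h m (by simp [support_monomial])
  · intro h m' hm'
    rw [support_monomial, if_neg one_ne_zero, Finset.mem_singleton] at hm'
    exact hm' ▸ h

/-- If the degree is concentrated in one coordinate, the monomial is a pure power. -/
lemma eq_single_of_monDeg {n : ℕ} {m : Mon n} {d : ℕ} (h : monDeg m = d) (i : Fin n)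
    (hi : m i = d) : m = Finsupp.single i d := by
  classical
  have hsum : ∑ j, m j = d := h
  rw [← Finset.add_sum_erase _ _ (Finset.mem_univ i), hi] at hsum
  have hz : ∀ j ∈ Finset.univ.erase i, m j = 0 :=
    (Finset.sum_eq_zero_iff).mp (by omega)
  ext j
  rcases eq_or_ne j i with rfl | hne
  · simp [hi]
  · rw [Finsupp.single_apply, if_neg (fun hh => hne hh.symm)]
    exact hz j (Finset.mem_erase.mpr ⟨hne, Finset.mem_univ j⟩)

lemma monDeg_single {n : ℕ} (i : Fin n) (d : ℕ) : monDeg (Finsupp.single i d) = d := by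
  classical
  simp [monDeg, Finsupp.single_apply]

/-- Every monomial in the lexsegment is divisible by some variable `x_i` with `i < q`. -/
lemma lexSeg_exists_low {n : ℕ} [NeZero n] {d q : ℕ} {u v : Mon n}
    (hq1 : 1 < q) (hqn : q < n)
    (hbq : 0 < v ⟨q - 1, by omega⟩)
    (hvlow : ∀ i : Fin n, i.val < q - 1 → v i = 0)
    {w : Mon n} (hw : w ∈ lexSeg d u v) :
    ∃ i : Fin n, i.val < q ∧ w i ≠ 0 := by
  by_contra h
  push_neg at h
  have hlt : toLex w < toLex v := by
    rw [Finsupp.Lex.lt_iff]; simp only [ofLex_toLex]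
    refine ⟨⟨q - 1, by omega⟩, ?_, ?_⟩
    · intro j hj
      have hj' : j.val < q - 1 := hj
      rw [hvlow j hj', h j (by omega)]
    · rw [h _ (by exact Nat.sub_lt (by omega) one_pos)]
      exact hbq
  exact absurd (lt_of_le_of_lt hw.2.1 hlt) (lt_irrefl _)

/-- Every monomial in the lexsegment is divisible by some variable `x_i` with `i ≥ 1`. -/
lemma lexSeg_exists_high {n : ℕ} [NeZero n] {d : ℕ} {u v : Mon n}
    (hd : 2 ≤ d) (hu : monDeg u = d) (ha1 : 1 < u 0) (hune : u ≠ Finsupp.single 0 d)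
    {w : Mon n} (hw : w ∈ lexSeg d u v) :
    ∃ i : Fin n, 0 < i.val ∧ w i ≠ 0 := by
  classical
  by_contra h
  push_neg at h
  have hw0 : w 0 = d := by
    have : ∑ j, w j = d := hw.1
    rw [← Finset.add_sum_erase _ _ (Finset.mem_univ (0 : Fin n))] at this
    have hz : ∑ j ∈ Finset.univ.erase (0 : Fin n), w j = 0 :=
      Finset.sum_eq_zero fun j hj => by
        have hj0 : j ≠ 0 := (Finset.mem_erase.mp hj).1
        exact h j (by
          rcases Nat.eq_zero_or_pos j.val with hp | hp
          · exact absurd (Fin.ext hp) hj0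
          · exact hp)
    omega
  have hu0 : u 0 < d := by
    have hle : u 0 ≤ d := by
      have h1 : u 0 ≤ ∑ j, u j :=
        Finset.single_le_sum (fun j _ => Nat.zero_le _) (Finset.mem_univ (0 : Fin n))
      have h2 : ∑ j, u j = d := hu
      omega
    rcases lt_or_eq_of_le hle with hlt | heq
    · exact hlt
    · exact absurd (eq_single_of_monDeg hu 0 heq) hune
  have hlt : toLex u < toLex w := by
    rw [Finsupp.Lex.lt_iff]; simp only [ofLex_toLex]
    refine ⟨0, fun j hj => ?_, by rw [hw0] at *; exact hu0⟩
    exact absurd hj (by simp [Fin.lt_def])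
  exact absurd (lt_of_le_of_lt hw.2.2 hlt) (lt_irrefl _)

/-- `x_i^d ∈ L(u,v)` for `1 ≤ i ≤ q-1`. -/
lemma single_mem_lexSeg {n : ℕ} [NeZero n] {d q : ℕ} {u v : Mon n}
    (hq1 : 1 < q) (hqn : q < n) (hv : monDeg v = d)
    (ha1 : 1 < u 0)
    (hvlow : ∀ i : Fin n, i.val < q - 1 → v i = 0)
    (i : Fin n) (hi1 : 0 < i.val) (hi2 : i.val ≤ q - 1) :
    Finsupp.single i d ∈ lexSeg d u v := by
  refine ⟨monDeg_single i d, ?_, ?_⟩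
  · rcases le_or_gt d (v i) with hvi | hvi
    · have hvi' : v i = d := by
        have h1 : v i ≤ ∑ j, v j :=
          Finset.single_le_sum (fun j _ => Nat.zero_le _) (Finset.mem_univ i)
        have h2 : ∑ j, v j = d := hv
        omega
      rw [eq_single_of_monDeg hv i hvi']
    · apply le_of_lt
      rw [Finsupp.Lex.lt_iff]; simp only [ofLex_toLex]
      refine ⟨i, fun j hj => ?_, ?_⟩
      · have hj' : j.val < i.val := hj
        rw [hvlow j (by omega), Finsupp.single_apply,
          if_neg (fun hh : i = j => by omega)]
      · rwa [Finsupp.single_apply, if_pos rfl]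
  · apply le_of_lt
    rw [Finsupp.Lex.lt_iff]; simp only [ofLex_toLex]
    refine ⟨0, fun j hj => absurd hj (by simp [Fin.lt_def]), ?_⟩
    rw [Finsupp.single_apply, if_neg (fun hh : i = 0 => by
      subst hh; simp at hi1)]
    omega

/-- `x_1 x_j^{d-1} ∈ L(u,v)` for `j ≥ 1`. -/
lemma mixed_mem_lexSeg {n : ℕ} [NeZero n] {d q : ℕ} {u v : Mon n}
    (hd : 2 ≤ d) (hq1 : 1 < q) (ha1 : 1 < u 0)
    (hvlow : ∀ i : Fin n, i.val < q - 1 → v i = 0)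
    (j : Fin n) (hj : 0 < j.val) :
    Finsupp.single (0 : Fin n) 1 + Finsupp.single j (d - 1) ∈ lexSeg d u v := by
  classical
  have hj0 : j ≠ 0 := fun hh => by rw [hh] at hj; simp at hj
  set w : Mon n := Finsupp.single (0 : Fin n) 1 + Finsupp.single j (d - 1) with hwdef
  have hw0 : w 0 = 1 := by
    rw [hwdef, Finsupp.add_apply, Finsupp.single_apply, Finsupp.single_apply, if_pos rfl,
      if_neg hj0]
    rfl
  refine ⟨?_, ?_, ?_⟩
  · show monDeg w = d
    have h1 : monDeg w = monDeg (Finsupp.single (0 : Fin n) 1) +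
        monDeg (Finsupp.single j (d - 1)) := by
      rw [hwdef]
      simp only [monDeg, Finsupp.add_apply, Finset.sum_add_distrib]
    rw [h1, monDeg_single, monDeg_single]
    omega
  · apply le_of_lt
    rw [Finsupp.Lex.lt_iff]; simp only [ofLex_toLex]
    refine ⟨0, fun j' hj' => absurd hj' (by simp [Fin.lt_def]), ?_⟩
    rw [hw0, hvlow 0 (by
      show (0 : Fin n).val < q - 1
      simp only [Fin.val_zero]
      omega)]
    omega
  · apply le_of_lt
    rw [Finsupp.Lex.lt_iff]; simp only [ofLex_toLex]
    refine ⟨0, fun j' hj' => absurd hj' (by simp [Fin.lt_def]), ?_⟩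
    rw [hw0]; exact ha1

/-- Every prime over the lexsegment ideal contains one of the two candidate primes. -/
lemma prime_over_lexSeg {n : ℕ} [NeZero n] {k : Type*} [Field k]
    {d q : ℕ} (hd : 2 ≤ d) (hq1 : 1 < q) (hqn : q < n) {u v : Mon n}
    (hv : monDeg v = d) (ha1 : 1 < u 0)
    (hvlow : ∀ i : Fin n, i.val < q - 1 → v i = 0)
    (P : Ideal (MvPolynomial (Fin n) k)) (hP : P.IsPrime)
    (hIP : monomialIdeal k (lexSeg d u v) ≤ P) :
    Ideal.span ((fun i => (X i : MvPolynomial (Fin n) k)) '' {i : Fin n | i.val < q}) ≤ P ∨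
    Ideal.span ((fun i => (X i : MvPolynomial (Fin n) k)) '' {i : Fin n | 0 < i.val}) ≤ P := by
  by_cases h2 : Ideal.span
      ((fun i => (X i : MvPolynomial (Fin n) k)) '' {i : Fin n | 0 < i.val}) ≤ P
  · exact Or.inr h2
  · left
    rw [Ideal.span_le] at h2 ⊢
    obtain ⟨x, hx, hxP⟩ := Set.not_subset.mp h2
    obtain ⟨j, hj, rfl⟩ := hx
    rintro _ ⟨i, hi, rfl⟩
    show (X i : MvPolynomial (Fin n) k) ∈ P
    have hmem : ∀ w ∈ lexSeg d u v,
        (monomial w (1 : k) : MvPolynomial (Fin n) k) ∈ P := fun w hw =>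
      hIP (Ideal.subset_span ⟨w, hw, rfl⟩)
    rcases Nat.eq_zero_or_pos i.val with hip | hip
    · have hieq : i = 0 := Fin.ext hip
      have hw := mixed_mem_lexSeg hd hq1 ha1 hvlow j hj
      have hmon := hmem _ hw
      have heq : (monomial (Finsupp.single (0 : Fin n) 1 + Finsupp.single j (d - 1))
          (1 : k) : MvPolynomial (Fin n) k) = X 0 ^ 1 * X j ^ (d - 1) := by
        rw [monomial_single_add, X_pow_eq_monomial, X_pow_eq_monomial]
      rw [heq] at hmon
      rcases hP.mem_or_mem hmon with h | h
      · rw [hieq]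
        exact hP.mem_of_pow_mem _ h
      · exact absurd (hP.mem_of_pow_mem _ h) hxP
    · have hw := single_mem_lexSeg hq1 hqn hv ha1 hvlow i hip (by
        have : i.val < q := hi
        omega)
      have := hmem _ hw
      rw [← X_pow_eq_monomial] at this
      exact hP.mem_of_pow_mem d this

end Aux

/-- For a lexsegment ideal `I = (L(u,v))` with `u = x_1^{a_1} ⋯ x_n^{a_n}`, `a_1 > 1`,
`u ≠ x_1^d`, and `v = x_q^{b_q} ⋯ x_n^{b_n}` with `1 < q < n`, `b_q > 0`, the minimal primes
of `I` are exactly `(x_1, …, x_q)` and `(x_2, …, x_n)`. -/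
theorem minimalPrimes_lexsegment {n : ℕ} [NeZero n] (hn : 3 ≤ n) (k : Type*) [Field k]
    (d : ℕ) (hd : 2 ≤ d) (q : ℕ) (hq1 : 1 < q) (hqn : q < n)
    (u v : Mon n) (hu : monDeg u = d) (hv : monDeg v = d)
    (ha1 : 1 < u 0) (hune : u ≠ Finsupp.single 0 d)
    (hbq : 0 < v ⟨q - 1, by omega⟩)
    (hvlow : ∀ i : Fin n, i.val < q - 1 → v i = 0)
    (huv : toLex v ≤ toLex u) :
    (monomialIdeal k (lexSeg d u v)).minimalPrimes =
      {Ideal.span ((fun i => (X i : MvPolynomial (Fin n) k)) '' {i : Fin n | i.val < q}),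
       Ideal.span ((fun i => (X i : MvPolynomial (Fin n) k)) '' {i : Fin n | 0 < i.val})} := by
  set P1 : Ideal (MvPolynomial (Fin n) k) :=
    Ideal.span ((fun i => (X i : MvPolynomial (Fin n) k)) '' {i : Fin n | i.val < q}) with hP1
  set P2 : Ideal (MvPolynomial (Fin n) k) :=
    Ideal.span ((fun i => (X i : MvPolynomial (Fin n) k)) '' {i : Fin n | 0 < i.val}) with hP2
  have hprime1 : P1.IsPrime := span_X_isPrime k _
  have hprime2 : P2.IsPrime := span_X_isPrime k _
  have hI1 : monomialIdeal k (lexSeg d u v) ≤ P1 := by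
    rw [monomialIdeal, Ideal.span_le]
    rintro _ ⟨w, hw, rfl⟩
    obtain ⟨i, hi, hne⟩ := lexSeg_exists_low hq1 hqn hbq hvlow hw
    exact monomial_mem_span_X_iff.mpr ⟨i, hi, hne⟩
  have hI2 : monomialIdeal k (lexSeg d u v) ≤ P2 := by
    rw [monomialIdeal, Ideal.span_le]
    rintro _ ⟨w, hw, rfl⟩
    obtain ⟨i, hi, hne⟩ := lexSeg_exists_high hd hu ha1 hune hw
    exact monomial_mem_span_X_iff.mpr ⟨i, hi, hne⟩
  have hne1 : ¬ P2 ≤ P1 := by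
    intro hle
    have hmem : (X (⟨n - 1, by omega⟩ : Fin n) : MvPolynomial (Fin n) k) ∈ P2 :=
      Ideal.subset_span ⟨⟨n - 1, by omega⟩, by show (0:ℕ) < n - 1; omega, rfl⟩
    have := X_mem_span_X_iff.mp (hle hmem)
    simp only [Set.mem_setOf_eq] at this
    omega
  have hne2 : ¬ P1 ≤ P2 := by
    intro hle
    have hmem : (X (0 : Fin n) : MvPolynomial (Fin n) k) ∈ P1 :=
      Ideal.subset_span ⟨0, by simp; omega, rfl⟩
    have := X_mem_span_X_iff.mp (hle hmem)
    simp at this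
  have hclaim := fun (P : Ideal (MvPolynomial (Fin n) k)) (hP : P.IsPrime)
      (hIP : monomialIdeal k (lexSeg d u v) ≤ P) =>
    prime_over_lexSeg hd hq1 hqn hv ha1 hvlow P hP hIP
  ext P
  simp only [Set.mem_insert_iff, Set.mem_singleton_iff]
  constructor
  · rintro ⟨⟨hPp, hIP⟩, hmin⟩
    rcases hclaim P hPp hIP with h | h
    · exact Or.inl (le_antisymm (hmin ⟨hprime1, hI1⟩ h) h)
    · exact Or.inr (le_antisymm (hmin ⟨hprime2, hI2⟩ h) h)
  · rintro (rfl | rfl)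
    · refine ⟨⟨hprime1, hI1⟩, ?_⟩
      intro y hy hyle
      rcases hclaim y hy.1 hy.2 with h | h
      · exact h
      · exact absurd (h.trans hyle) hne1
    · refine ⟨⟨hprime2, hI2⟩, ?_⟩
      intro y hy hyle
      rcases hclaim y hy.1 hy.2 with h | h
      · exact absurd (h.trans hyle) hne2
      · exact h
end

section
/- Let u = x_1^{a_1}···x_n^{a_n} and v = x_q^{b_q}···x_n^{b_n} be monomials of degree d with u ≥_lex v, where q ≥ 2, a_1 > 0 and b_q > 0, and let I = (L(u,v)). If x_n·u/x_1 <_lex v, then x_1 − x_n is a nonzerodivisor on S/I (i.e., the image of x_1 − x_n in S/I is a regular element). -/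
open MvPolynomial

section Aux

variable {n : ℕ}

lemma lex_lt_of_lt_zero [NeZero n] {a b : Mon n} (h : a 0 < b 0) :
    toLex a < toLex b := by
  rw [Finsupp.Lex.lt_iff]
  exact ⟨0, fun j hj => absurd hj (by simp [Fin.lt_def]), h⟩

lemma zero_le_of_lex_le [NeZero n] {a b : Mon n} (h : toLex a ≤ toLex b) :
    a 0 ≤ b 0 := by
  by_contra hc
  push_neg at hc
  exact absurd (lex_lt_of_lt_zero hc) (not_lt.mpr h)

lemma lex_single_le [NeZero n] {i j : Fin n} (h : j ≤ i) :
    toLex (Finsupp.single i (1 : ℕ)) ≤ toLex (Finsupp.single j (1 : ℕ)) := by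
  rcases eq_or_lt_of_le h with rfl | hlt
  · exact le_rfl
  · apply le_of_lt
    rw [Finsupp.Lex.lt_iff]
    refine ⟨j, fun l hl => ?_, ?_⟩
    · simp only [ofLex_toLex]
      rw [Finsupp.single_eq_of_ne' (ne_of_gt (hl.trans hlt)),
        Finsupp.single_eq_of_ne' (ne_of_gt hl)]
    · simp only [ofLex_toLex]
      rw [Finsupp.single_eq_of_ne' (ne_of_gt hlt), Finsupp.single_eq_same]
      exact Nat.zero_lt_one

lemma monDeg_mono {a b : Mon n} (h : a ≤ b) : monDeg a ≤ monDeg b :=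
  Finset.sum_le_sum fun i _ => Finsupp.le_def.mp h i

lemma monDeg_add_single (a : Mon n) (j : Fin n) :
    monDeg (a + Finsupp.single j 1) = monDeg a + 1 := by
  unfold monDeg
  simp only [Finsupp.add_apply, Finset.sum_add_distrib]
  congr 1
  simp [Finsupp.single_apply]

lemma eq_of_le_of_monDeg_le {a b : Mon n} (h : a ≤ b) (hd : monDeg b ≤ monDeg a) :
    a = b := by
  by_contra hne
  have hex : ∃ i, a i < b i := by
    by_contra hno
    push_neg at hno
    exact hne (Finsupp.ext fun i => le_antisymm (Finsupp.le_def.mp h i) (hno i))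
  obtain ⟨i, hi⟩ := hex
  have : monDeg a < monDeg b :=
    Finset.sum_lt_sum (fun j _ => Finsupp.le_def.mp h j) ⟨i, Finset.mem_univ i, hi⟩
  omega

end Aux

/-- If `x_n · u / x_1 <_lex v`, then `x_1 - x_n` is a nonzerodivisor on `S/I`, where
`I = (L(u,v))`. -/
theorem x1_sub_xn_regular {n : ℕ} [NeZero n] (hn : 2 ≤ n) (k : Type*) [Field k]
    (d : ℕ) (hd : 2 ≤ d) (q : ℕ) (hq : 2 ≤ q) (hqn : q ≤ n)
    (u v : Mon n) (hu : monDeg u = d) (hv : monDeg v = d)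
    (ha1 : 0 < u 0) (hbq : 0 < v ⟨q - 1, by omega⟩)
    (hvlow : ∀ i : Fin n, i.val < q - 1 → v i = 0)
    (huv : toLex v ≤ toLex u)
    (hcond : toLex (u + Finsupp.single (⟨n - 1, by omega⟩ : Fin n) 1 -
      Finsupp.single 0 1) < toLex v) :
    Ideal.Quotient.mk (monomialIdeal k (lexSeg d u v))
        (X 0 - X (⟨n - 1, by omega⟩ : Fin n)) ∈
      nonZeroDivisors (MvPolynomial (Fin n) k ⧸ monomialIdeal k (lexSeg d u v)) := by
  classical
  have hn1 : n - 1 < n := by omega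
  set nn : Fin n := ⟨n - 1, hn1⟩ with hnndef
  have hnn0 : nn ≠ 0 := by
    simp only [hnndef, Fin.ne_iff_vne, Fin.val_zero]
    omega
  have hv0 : v 0 = 0 := hvlow 0 (by simp only [Fin.val_zero]; omega)
  -- u 0 = 1
  have hu0 : u 0 = 1 := by
    have hA0 : ((u + Finsupp.single nn 1 - Finsupp.single (0 : Fin n) 1 : Mon n)) 0
        = u 0 - 1 := by
      rw [Finsupp.tsub_apply, Finsupp.add_apply, Finsupp.single_eq_of_ne' hnn0,
        Finsupp.single_eq_same]
      omega
    rw [Finsupp.Lex.lt_iff] at hcond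
    obtain ⟨i, hprev, hi⟩ := hcond
    simp only [ofLex_toLex] at hprev hi
    rcases eq_or_ne i 0 with rfl | hi0
    · rw [hA0, hv0] at hi
      omega
    · have h0i : (0 : Fin n) < i := (Fin.pos_iff_ne_zero' i).mpr hi0
      have := hprev 0 h0i
      rw [hA0, hv0] at this
      omega
  rw [mem_nonZeroDivisors_iff_right]
  intro x hx
  obtain ⟨p, rfl⟩ := Ideal.Quotient.mk_surjective x
  rw [← map_mul, Ideal.Quotient.eq_zero_iff_mem] at hx
  rw [Ideal.Quotient.eq_zero_iff_mem]
  rw [monomialIdeal, mem_ideal_span_monomial_image] at hx ⊢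
  by_contra hcon
  push_neg at hcon
  obtain ⟨m1, hm1supp, hm1std⟩ := hcon
  set B := p.support.filter (fun m => ∀ w ∈ lexSeg d u v, ¬ w ≤ m) with hBdef
  have hB : B.Nonempty := ⟨m1, Finset.mem_filter.mpr ⟨hm1supp, hm1std⟩⟩
  obtain ⟨m, hmB, hmax⟩ := Finset.exists_max_image B (fun m => m 0) hB
  obtain ⟨hmsupp, hmstd⟩ := Finset.mem_filter.mp hmB
  have hpm : coeff m p ≠ 0 := mem_support_iff.mp hmsupp
  have hwitness : ∀ t, coeff t (p * (X 0 - X nn)) ≠ 0 → ∃ w ∈ lexSeg d u v, w ≤ t :=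
    fun t ht => hx t (mem_support_iff.mpr ht)
  -- Step 1 : some generator divides x_1 * m
  have step1 : ∃ w ∈ lexSeg d u v, w ≤ m + Finsupp.single (0 : Fin n) 1 := by
    have hsub : coeff (m + Finsupp.single (0 : Fin n) 1) (p * (X 0 - X nn)) =
        coeff m p - (if nn ∈ (m + Finsupp.single (0 : Fin n) 1).support then
          coeff (m + Finsupp.single (0 : Fin n) 1 - Finsupp.single nn 1) p else 0) := by
      rw [mul_sub, coeff_sub, coeff_mul_X, coeff_mul_X']
    by_cases hnnmem : nn ∈ (m + Finsupp.single (0 : Fin n) 1).support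
    · set t' := m + Finsupp.single (0 : Fin n) 1 - Finsupp.single nn 1 with ht'def
      by_cases hpt' : coeff t' p = 0
      · apply hwitness
        rw [hsub, if_pos hnnmem, hpt', sub_zero]
        exact hpm
      · by_cases hstd' : ∀ w ∈ lexSeg d u v, ¬ w ≤ t'
        · exfalso
          have ht'B : t' ∈ B := Finset.mem_filter.mpr ⟨mem_support_iff.mpr hpt', hstd'⟩
          have hle0 := hmax t' ht'B
          have ht'0 : t' 0 = m 0 + 1 := by
            rw [ht'def, Finsupp.tsub_apply, Finsupp.add_apply, Finsupp.single_eq_same,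
              Finsupp.single_eq_of_ne' hnn0]
            omega
          simp only [ht'0] at hle0
          omega
        · push_neg at hstd'
          obtain ⟨w, hwL, hwle⟩ := hstd'
          exact ⟨w, hwL, hwle.trans tsub_le_self⟩
    · apply hwitness
      rw [hsub, if_neg hnnmem, sub_zero]
      exact hpm
  obtain ⟨w, hwL, hwle⟩ := step1
  have hw_not : ¬ w ≤ m := hmstd w hwL
  -- w 0 = m 0 + 1 and m 0 = 0
  have hw0 : w 0 = m 0 + 1 := by
    rw [Finsupp.le_def] at hw_not
    push_neg at hw_not
    obtain ⟨i, hi⟩ := hw_not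
    have hle := Finsupp.le_def.mp hwle
    rcases eq_or_ne i 0 with rfl | hi0
    · have h0 := hle 0
      rw [Finsupp.add_apply, Finsupp.single_eq_same] at h0
      omega
    · exfalso
      have h1 := hle i
      rw [Finsupp.add_apply, Finsupp.single_eq_of_ne' (fun he => hi0 he.symm)] at h1
      omega
  have hm0 : m 0 = 0 := by
    have := zero_le_of_lex_le hwL.2.2
    omega
  -- Step 3 : some generator divides x_n * m
  have step3 : ∃ w ∈ lexSeg d u v, w ≤ m + Finsupp.single nn 1 := by
    apply hwitness
    have hc0 : (0 : Fin n) ∉ (m + Finsupp.single nn 1).support := by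
      rw [Finsupp.mem_support_iff]
      push_neg
      rw [Finsupp.add_apply, Finsupp.single_eq_of_ne' hnn0, hm0]
      omega
    have : coeff (m + Finsupp.single nn 1) (p * (X 0 - X nn)) = 0 - coeff m p := by
      rw [mul_sub, coeff_sub, coeff_mul_X, coeff_mul_X', if_neg hc0]
    rw [this, zero_sub]
    exact neg_ne_zero.mpr hpm
  obtain ⟨wh, hwhL, hwhle⟩ := step3
  have hwh_not : ¬ wh ≤ m := hmstd wh hwhL
  have hwhnn : wh nn = m nn + 1 := by
    rw [Finsupp.le_def] at hwh_not
    push_neg at hwh_not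
    obtain ⟨i, hi⟩ := hwh_not
    have hle := Finsupp.le_def.mp hwhle
    rcases eq_or_ne i nn with rfl | hinn
    · have h0 := hle nn
      rw [Finsupp.add_apply, Finsupp.single_eq_same] at h0
      omega
    · exfalso
      have h1 := hle i
      rw [Finsupp.add_apply, Finsupp.single_eq_of_ne' (fun he => hinn he.symm)] at h1
      omega
  have hwh0 : wh 0 = 0 := by
    have h1 := Finsupp.le_def.mp hwhle 0
    rw [Finsupp.add_apply, Finsupp.single_eq_of_ne' hnn0, hm0] at h1
    omega
  -- degree comparison
  have hdm : d ≤ monDeg m + 1 := by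
    have h1 := monDeg_mono hwhle
    rw [monDeg_add_single, hwhL.1] at h1
    exact h1
  rcases eq_or_lt_of_le hdm with hcase | hcase
  · -- monDeg m = d - 1 : direct contradiction with hcond
    have hwheq : wh = m + Finsupp.single nn 1 :=
      eq_of_le_of_monDeg_le hwhle (by rw [monDeg_add_single, hwhL.1]; omega)
    have hweq : w = m + Finsupp.single (0 : Fin n) 1 :=
      eq_of_le_of_monDeg_le hwle (by rw [monDeg_add_single, hwL.1]; omega)
    have hAe : (u + Finsupp.single nn 1 - Finsupp.single (0 : Fin n) 1) +
        Finsupp.single (0 : Fin n) 1 = u + Finsupp.single nn 1 := by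
      ext i
      simp only [Finsupp.add_apply, Finsupp.tsub_apply]
      rcases eq_or_ne i 0 with rfl | hi0
      · rw [Finsupp.single_eq_same, Finsupp.single_eq_of_ne' hnn0, hu0]
        omega
      · rw [Finsupp.single_eq_of_ne' (fun he => hi0 he.symm)]
        omega
    have hlex1 : (toLex (w + Finsupp.single nn 1) : Lex (Mon n)) ≤
        toLex (u + Finsupp.single nn 1) :=
      add_le_add_left hwL.2.2 (toLex (Finsupp.single nn 1))
    have hrearr : w + Finsupp.single nn 1 =
        (m + Finsupp.single nn 1) + Finsupp.single (0 : Fin n) 1 := by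
      rw [hweq, add_right_comm]
    have hchain : (toLex (m + Finsupp.single nn 1) : Lex (Mon n)) ≤
        toLex (u + Finsupp.single nn 1 - Finsupp.single (0 : Fin n) 1) := by
      have h2 : (toLex ((m + Finsupp.single nn 1) + Finsupp.single (0 : Fin n) 1) :
          Lex (Mon n)) ≤
          toLex ((u + Finsupp.single nn 1 - Finsupp.single (0 : Fin n) 1) +
            Finsupp.single (0 : Fin n) 1) := by
        rw [hAe, ← hrearr]
        exact hlex1
      exact le_of_add_le_add_right h2
    have hfinal : (toLex (m + Finsupp.single nn 1) : Lex (Mon n)) <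
        toLex (m + Finsupp.single nn 1) :=
      lt_of_le_of_lt hchain (lt_of_lt_of_le hcond (hwhL.2.1.trans_eq (by rw [hwheq])))
    exact absurd hfinal (lt_irrefl _)
  · -- monDeg m ≥ d : construct a generator dividing m
    set c := wh - Finsupp.single nn 1 with hcdef
    have hc_add : c + Finsupp.single nn 1 = wh := by
      ext i
      rw [hcdef]
      simp only [Finsupp.add_apply, Finsupp.tsub_apply]
      rcases eq_or_ne i nn with rfl | hinn
      · rw [Finsupp.single_eq_same]
        omega
      · rw [Finsupp.single_eq_of_ne' (fun he => hinn he.symm)]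
        omega
    have hcle : c ≤ m := by
      rw [Finsupp.le_def]
      intro i
      have h1 := Finsupp.le_def.mp hwhle i
      rw [Finsupp.add_apply] at h1
      rw [hcdef, Finsupp.tsub_apply]
      rcases eq_or_ne i nn with rfl | hinn
      · rw [Finsupp.single_eq_same] at h1 ⊢
        omega
      · rw [Finsupp.single_eq_of_ne' (fun he => hinn he.symm)] at h1 ⊢
        omega
    have hcdeg : monDeg c + 1 = d := by
      rw [← monDeg_add_single c nn, hc_add, hwhL.1]
    have hc0 : c 0 = 0 := by
      rw [hcdef, Finsupp.tsub_apply, Finsupp.single_eq_of_ne' hnn0, hwh0]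
      omega
    have hex : ∃ j, c j < m j := by
      by_contra hno
      push_neg at hno
      have hml : m ≤ c := Finsupp.le_def.mpr hno
      have := monDeg_mono hml
      omega
    obtain ⟨j, hj⟩ := hex
    have hj0 : j ≠ 0 := by
      intro hj0
      rw [hj0, hc0, hm0] at hj
      omega
    set W := c + Finsupp.single j 1 with hWdef
    have hWle : W ≤ m := by
      rw [Finsupp.le_def]
      intro i
      rw [hWdef, Finsupp.add_apply]
      rcases eq_or_ne i j with rfl | hij
      · rw [Finsupp.single_eq_same]
        omega
      · rw [Finsupp.single_eq_of_ne' (fun he => hij he.symm)]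
        simpa using Finsupp.le_def.mp hcle i
    have hjnn : j ≤ nn := by
      rw [Fin.le_def]
      have := j.2
      simp only [hnndef]
      omega
    have hWL : W ∈ lexSeg d u v := by
      refine ⟨by rw [hWdef, monDeg_add_single]; omega, ?_, ?_⟩
      · calc (toLex v : Lex (Mon n)) ≤ toLex wh := hwhL.2.1
          _ = toLex (c + Finsupp.single nn 1) := by rw [hc_add]
          _ ≤ toLex (c + Finsupp.single j 1) :=
              add_le_add_right (lex_single_le hjnn) (toLex c)
      · apply le_of_lt
        apply lex_lt_of_lt_zero
        rw [hWdef, Finsupp.add_apply, Finsupp.single_eq_of_ne' hj0, hc0, hu0]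
        omega
    exact hmstd W hWL hWle
end
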